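/- arXiv:2401.09610 — 7 statements merged into one kernel-verified Lean document; each statement's English description precedes it below -/
import Mathlib

section
/- The harmonious total chromatic number of the complete graph K_4 equals 7, i.e. h_t(K_4) = 7. In particular, K_4 admits a harmonious total colouring with 7 colours, and admits no harmonious total colouring with 6 colours. -/
/-- A harmonious total colouring of a simple graph `G` with `k` colours:
vertex colours `cv`, edge colours `ce`; proper on vertices, edges and
vertex-edge incidences, and the unordered pairs `{cv v, ce e}` over incident
vertex-edge pairs are pairwise distinct. -/
def IsHarmoniousTotalColoring {V : Type*} (G : SimpleGraph V) (k : ℕ)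
    (cv : V → Fin k) (ce : Sym2 V → Fin k) : Prop :=
  (∀ u v, G.Adj u v → cv u ≠ cv v) ∧
  (∀ e f, e ∈ G.edgeSet → f ∈ G.edgeSet → e ≠ f → (∃ v, v ∈ e ∧ v ∈ f) → ce e ≠ ce f) ∧
  (∀ v e, e ∈ G.edgeSet → v ∈ e → cv v ≠ ce e) ∧
  (∀ v e w f, e ∈ G.edgeSet → f ∈ G.edgeSet → v ∈ e → w ∈ f →
    s(cv v, ce e) = s(cv w, ce f) → v = w ∧ e = f)

lemma comp_inj {V : Type*} {G : SimpleGraph V} {k m : ℕ} (f : Fin k → Fin m)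
    (hf : Function.Injective f) {cv ce} (H : IsHarmoniousTotalColoring G k cv ce) :
    IsHarmoniousTotalColoring G m (f ∘ cv) (f ∘ ce) := by
  obtain ⟨H1, H2, H3, H4⟩ := H
  refine ⟨fun u v h hh => H1 u v h (hf hh),
    fun e f' he hf' hne hs hh => H2 e f' he hf' hne hs (hf hh),
    fun v e he hv hh => H3 v e he hv (hf hh),
    fun v e w f' he hf' hv hw hh => H4 v e w f' he hf' hv hw ?_⟩
  apply Sym2.map.injective hf
  simpa [Sym2.map_pair_eq] using hh

lemma mem_edge {u v : Fin 4} (h : u ≠ v) : s(u, v) ∈ (⊤ : SimpleGraph (Fin 4)).edgeSet :=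
  (SimpleGraph.mem_edgeSet _).2 h

lemma exists_perm {cv : Fin 4 → Fin 6} (h : Function.Injective cv) :
    ∃ σ : Equiv.Perm (Fin 6), ∀ i : Fin 4, σ (cv i) = ⟨i.val, by omega⟩ := by
  classical
  let e2 : Fin 4 ≃ {x : Fin 6 // x.val < 4} :=
    { toFun := fun i => ⟨⟨i.val, by omega⟩, i.isLt⟩
      invFun := fun x => ⟨x.1.val, x.2⟩
      left_inv := fun i => rfl
      right_inv := fun x => by ext; rfl }
  let e := (Equiv.ofInjective cv h).symm.trans e2
  refine ⟨e.extendSubtype, fun i => ?_⟩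
  rw [Equiv.extendSubtype_apply_of_mem e (cv i) ⟨i, rfl⟩]
  show ((e2 ((Equiv.ofInjective cv h).symm ⟨cv i, ⟨i, rfl⟩⟩)) : Fin 6) = _
  rw [Equiv.ofInjective_symm_apply]
  rfl

def pc (x y : Fin 6) : ℕ := if x.val ≤ y.val then x.val * 6 + y.val else y.val * 6 + x.val

abbrev Cond (a b c d e f : Fin 6) : Prop :=
  a ≠ 0 ∧ a ≠ 1 ∧ b ≠ 0 ∧ b ≠ 2 ∧ c ≠ 0 ∧ c ≠ 3 ∧ d ≠ 1 ∧ d ≠ 2 ∧ e ≠ 1 ∧ e ≠ 3 ∧ f ≠ 2 ∧ f ≠ 3 ∧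
  a ≠ b ∧ a ≠ c ∧ b ≠ c ∧ a ≠ d ∧ a ≠ e ∧ d ≠ e ∧ b ≠ d ∧ b ≠ f ∧ d ≠ f ∧ c ≠ e ∧ c ≠ f ∧ e ≠ f ∧
  ([pc 0 a, pc 1 a, pc 0 b, pc 2 b, pc 0 c, pc 3 c, pc 1 d, pc 2 d, pc 1 e, pc 3 e, pc 2 f, pc 3 f] : List ℕ).Nodup

set_option maxRecDepth 100000 in
set_option maxHeartbeats 4000000 in
lemma no6cond : ∀ a b c d e f : Fin 6, ¬ Cond a b c d e f := by decide

set_option maxRecDepth 100000 in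
lemma pc_inj : ∀ x y x' y' : Fin 6, pc x y = pc x' y' → s(x, y) = s(x', y') := by decide

lemma no6 : ¬ ∃ cv ce, IsHarmoniousTotalColoring (⊤ : SimpleGraph (Fin 4)) 6 cv ce := by
  rintro ⟨cv, ce, H⟩
  have hinj : Function.Injective cv := by
    intro i j hij
    by_contra hne
    exact H.1 i j hne hij
  obtain ⟨σ, hσ⟩ := exists_perm hinj
  have H' := comp_inj (σ : Fin 6 → Fin 6) σ.injective H
  set cv' : Fin 4 → Fin 6 := (σ : Fin 6 → Fin 6) ∘ cv with hcv'
  set ce' : Sym2 (Fin 4) → Fin 6 := (σ : Fin 6 → Fin 6) ∘ ce with hce'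
  obtain ⟨H1, H2, H3, H4⟩ := H'
  have hc0 : cv' 0 = (0 : Fin 6) := by rw [hcv']; simp only [Function.comp_apply]; rw [hσ 0]; rfl
  have hc1 : cv' 1 = (1 : Fin 6) := by rw [hcv']; simp only [Function.comp_apply]; rw [hσ 1]; rfl
  have hc2 : cv' 2 = (2 : Fin 6) := by rw [hcv']; simp only [Function.comp_apply]; rw [hσ 2]; rfl
  have hc3 : cv' 3 = (3 : Fin 6) := by rw [hcv']; simp only [Function.comp_apply]; rw [hσ 3]; rfl
  have hpair : ∀ (v u w v' u' w' : Fin 4), u ≠ w → u' ≠ w' → (v = u ∨ v = w) → (v' = u' ∨ v' = w') →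
      pc (cv' v) (ce' s(u, w)) = pc (cv' v') (ce' s(u', w')) → v = v' ∧ s(u, w) = s(u', w') := by
    intro v u w v' u' w' h1 h2 h3 h4 h5
    exact H4 v s(u, w) v' s(u', w') (mem_edge h1) (mem_edge h2)
      (Sym2.mem_iff.2 h3) (Sym2.mem_iff.2 h4) (pc_inj _ _ _ _ h5)
  refine no6cond (ce' s(0,1)) (ce' s(0,2)) (ce' s(0,3)) (ce' s(1,2)) (ce' s(1,3)) (ce' s(2,3)) ?_
  unfold Cond
  rw [← hc0, ← hc1, ← hc2, ← hc3]
  repeat' apply And.intro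
  all_goals try exact Ne.symm (H3 _ _ (mem_edge (by decide)) (Sym2.mem_iff.2 (by decide)))
  all_goals try (exact H2 _ _ (mem_edge (by decide)) (mem_edge (by decide)) (by decide) (by simp only [Sym2.mem_iff]; decide))
  simp only [List.nodup_cons, List.mem_cons, List.not_mem_nil, not_or, or_false, List.nodup_nil, and_true]
  repeat' apply And.intro
  any_goals (intro hh; exact absurd (hpair _ _ _ _ _ _ (by decide) (by decide) (by decide) (by decide) hh) (by decide))
  all_goals exact not_false

def cv7 : Fin 4 → Fin 7 := ![0, 1, 2, 3]

def m7 : Fin 4 → Fin 4 → Fin 7 := ![![0, 2, 3, 1], ![2, 0, 4, 5], ![3, 4, 0, 6], ![1, 5, 6, 0]]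

def ce7 : Sym2 (Fin 4) → Fin 7 := Sym2.lift ⟨fun u v => m7 u v, by decide⟩

lemma ex7 : IsHarmoniousTotalColoring (⊤ : SimpleGraph (Fin 4)) 7 cv7 ce7 := by
  refine ⟨?_, ?_, ?_, ?_⟩
  · intro u v h
    rw [SimpleGraph.top_adj] at h
    revert h; revert u v; decide
  · intro e f
    induction e using Sym2.ind with | _ a b => ?_
    induction f using Sym2.ind with | _ c d => ?_
    rw [SimpleGraph.mem_edgeSet, SimpleGraph.mem_edgeSet, SimpleGraph.top_adj, SimpleGraph.top_adj]
    simp only [Sym2.mem_iff]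
    revert a b c d; decide
  · intro v e
    induction e using Sym2.ind with | _ a b => ?_
    rw [SimpleGraph.mem_edgeSet, SimpleGraph.top_adj]
    simp only [Sym2.mem_iff]
    revert v a b; decide
  · intro v e w f
    induction e using Sym2.ind with | _ a b => ?_
    induction f using Sym2.ind with | _ c d => ?_
    rw [SimpleGraph.mem_edgeSet, SimpleGraph.mem_edgeSet, SimpleGraph.top_adj, SimpleGraph.top_adj]
    simp only [Sym2.mem_iff]
    revert v w a b c d; decide

/-- The harmonious total chromatic number of `G`. -/
noncomputable def harmoniousTotalChromaticNumber {V : Type*} (G : SimpleGraph V) : ℕ :=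
  sInf {k | ∃ cv ce, IsHarmoniousTotalColoring G k cv ce}

/-- `h_t(K_4) = 7`: `K_4` has a harmonious total colouring with `7` colours
and none with `6` colours. -/
theorem ht_K4 :
    harmoniousTotalChromaticNumber (⊤ : SimpleGraph (Fin 4)) = 7 ∧
    (∃ cv ce, IsHarmoniousTotalColoring (⊤ : SimpleGraph (Fin 4)) 7 cv ce) ∧
    ¬ ∃ cv ce, IsHarmoniousTotalColoring (⊤ : SimpleGraph (Fin 4)) 6 cv ce := by
  have h7 : 7 ∈ {k | ∃ cv ce, IsHarmoniousTotalColoring (⊤ : SimpleGraph (Fin 4)) k cv ce} :=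
    ⟨cv7, ce7, ex7⟩
  refine ⟨le_antisymm (Nat.sInf_le h7) ?_, h7, no6⟩
  refine le_csInf ⟨7, h7⟩ ?_
  rintro k ⟨cv, ce, H⟩
  by_contra hlt
  push_neg at hlt
  have hk6 : k ≤ 6 := by omega
  exact no6 ⟨Fin.castLE hk6 ∘ cv, Fin.castLE hk6 ∘ ce,
    comp_inj (Fin.castLE hk6) (Fin.castLE_injective hk6) H⟩
end

section
/- For every integer n ≥ 2, every harmonious total colouring of the complete graph K_n uses at least 3n/2 colours; that is, h_t(K_n) ≥ 3n/2 (equivalently, h_t(K_n) ≥ ⌈3n/2⌉). -/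
/-!
Record the incidence of a vertex `v` with an edge `e` of `K_n` by the dart leaving `v` along `e`;
harmoniousness says the pair {colour of `v`, colour of `e`} determines the dart. The `n` vertex
colours are distinct. For a vertex colour `c = cv v`, the `n - 1` darts leaving `v` and the darts
along edges coloured `c` give distinct pairs `{c, x}` with `x ≠ c`, so at most `k - n` darts run
along edges of colour `c`. Every other colour is carried by a matching, hence by at most
`2 ⌊n/2⌋` darts. Summing over the `k` colours, `n (n - 1) ≤ (k - n) (n + 2 ⌊n/2⌋)`, which forces
`2 k ≥ 3 n`.
-/

open Finset SimpleGraph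

theorem SimpleGraph.Dart.eq_of_fst_eq_of_edge_eq {V : Type*} {G : SimpleGraph V}
    {d d' : G.Dart} (hfst : d.fst = d'.fst) (hedge : d.edge = d'.edge) : d = d' := by
  rcases (dart_edge_eq_iff d d').1 hedge with rfl | rfl
  · rfl
  · exact (d'.snd_ne_fst hfst).elim

theorem SimpleGraph.card_filter_dart_edge_eq_two_mul {V : Type*} (G : SimpleGraph V)
    [Fintype V] [DecidableRel G.Adj] (p : Sym2 V → Prop) [DecidablePred p] :
    #{d : G.Dart | p d.edge} = 2 * #{e ∈ G.edgeFinset | p e} := by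
  classical
  rw [card_eq_sum_card_fiberwise (f := Dart.edge) (t := {e ∈ G.edgeFinset | p e})
    (fun d hd => mem_filter.2 ⟨mem_edgeFinset.2 d.edge_mem, (mem_filter.1 hd).2⟩),
    mul_comm, ← smul_eq_mul, ← sum_const]
  refine sum_congr rfl fun e he => ?_
  rw [mem_filter, mem_edgeFinset] at he
  rw [filter_filter, ← G.dart_edge_fiber_card e he.1]
  congr 1
  exact filter_congr fun d _ => ⟨fun h => h.2, fun h => ⟨h ▸ he.2, h⟩⟩

theorem Nat.le_two_mul_of_mul_pred_le {n j : ℕ} (hn : 2 ≤ n)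
    (h : n * (n - 1) ≤ n * j + j * (2 * (n / 2))) : n ≤ 2 * j := by
  rcases Nat.even_or_odd' n with ⟨m, rfl | rfl⟩
  · rw [Nat.mul_div_cancel_left m two_pos] at h
    have : 2 * m - 1 ≤ 2 * j := by nlinarith
    omega
  · rw [show (2 * m + 1) / 2 = m by omega, show 2 * m + 1 - 1 = 2 * m by omega] at h
    by_contra! hj
    have : j ≤ m := by omega
    nlinarith

theorem exists_isHarmoniousTotalColoring {V : Type*} [Finite V] (G : SimpleGraph V) :
    ∃ k cv ce, IsHarmoniousTotalColoring G k cv ce := by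
  obtain ⟨k, ⟨σ⟩⟩ := Finite.exists_equiv_fin (V ⊕ Sym2 V)
  refine ⟨k, fun v => σ (.inl v), fun e => σ (.inr e), fun u v huv h => huv.ne ?_,
    fun e f _ _ hef _ h => hef ?_, fun v e _ _ h => ?_, fun v e w f _ _ _ _ h => ?_⟩
  · simpa using h
  · simpa using h
  · simp at h
  · rcases Sym2.eq_iff.1 h with h | h <;> simp_all

namespace IsHarmoniousTotalColoring

variable {V : Type*} {G : SimpleGraph V} {k : ℕ} {cv : V → Fin k} {ce : Sym2 V → Fin k}

theorem color_fst_ne_color_edge (h : IsHarmoniousTotalColoring G k cv ce) (d : G.Dart) :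
    cv d.fst ≠ ce d.edge :=
  h.2.2.1 _ _ d.edge_mem (Sym2.mem_mk_left _ _)

theorem injective_dart_pair (h : IsHarmoniousTotalColoring G k cv ce) :
    Function.Injective fun d : G.Dart => s(cv d.fst, ce d.edge) := fun d d' hdd' =>
  have ⟨hfst, hedge⟩ := h.2.2.2 _ _ _ _ d.edge_mem d'.edge_mem (Sym2.mem_mk_left _ _)
    (Sym2.mem_mk_left _ _) hdd'
  Dart.eq_of_fst_eq_of_edge_eq hfst hedge

theorem injective_of_top (h : IsHarmoniousTotalColoring (⊤ : SimpleGraph V) k cv ce) :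
    Function.Injective cv := fun u v huv => by
  by_contra hne
  exact h.1 u v hne huv

variable [Fintype V] [DecidableRel G.Adj]

theorem card_filter_mem_dart_pair_le (h : IsHarmoniousTotalColoring G k cv ce) (c : Fin k) :
    #{d : G.Dart | c ∈ s(cv d.fst, ce d.edge)} ≤ k - 1 := by
  have hmaps : ∀ d ∈ ({d : G.Dart | c ∈ s(cv d.fst, ce d.edge)} : Finset _),
      s(cv d.fst, ce d.edge) ∈ (univ.erase c).image fun x => s(c, x) := by
    intro d hd
    obtain ⟨x, hx⟩ := Sym2.mem_iff_exists.1 (mem_filter.1 hd).2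
    refine mem_image.2 ⟨x, mem_erase.2 ⟨?_, mem_univ x⟩, hx.symm⟩
    rintro rfl
    exact h.color_fst_ne_color_edge d (Sym2.mk_isDiag_iff.1 (hx ▸ Sym2.mk_isDiag_iff.2 rfl))
  calc _ ≤ #((univ.erase c).image fun x => s(c, x)) :=
        card_le_card_of_injOn _ hmaps h.injective_dart_pair.injOn
    _ ≤ #(univ.erase c) := card_image_le
    _ = k - 1 := by simp

theorem degree_add_card_filter_color_le [DecidableEq V] (h : IsHarmoniousTotalColoring G k cv ce)
    (v : V) : G.degree v + #{d : G.Dart | ce d.edge = cv v} ≤ k - 1 := by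
  rw [← dart_fst_fiber_card_eq_degree, ← card_union_of_disjoint]
  · refine (card_le_card fun d hd => ?_).trans (h.card_filter_mem_dart_pair_le (cv v))
    rw [mem_union, mem_filter, mem_filter] at hd
    rcases hd with ⟨-, rfl⟩ | ⟨-, hc⟩
    · exact mem_filter.2 ⟨mem_univ d, Sym2.mem_mk_left _ _⟩
    · exact mem_filter.2 ⟨mem_univ d, hc ▸ Sym2.mem_mk_right _ _⟩
  · refine disjoint_filter.2 fun d _ hv hc => h.color_fst_ne_color_edge d ?_
    rw [hv, hc]

theorem card_filter_color_le (h : IsHarmoniousTotalColoring G k cv ce) (c : Fin k) :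
    #{d : G.Dart | ce d.edge = c} ≤ 2 * (Fintype.card V / 2) := by
  have hfst : #{d : G.Dart | ce d.edge = c} ≤ Fintype.card V := by
    refine card_le_card_of_injOn (fun d => d.fst) (fun d _ => mem_univ _)
      fun d hd d' hd' hfst => ?_
    replace hd := (mem_filter.1 (mem_coe.1 hd)).2
    replace hd' := (mem_filter.1 (mem_coe.1 hd')).2
    replace hfst : d.fst = d'.fst := hfst
    refine Dart.eq_of_fst_eq_of_edge_eq hfst ?_
    by_contra hne
    exact h.2.1 _ _ d.edge_mem d'.edge_mem hne
      ⟨d.fst, Sym2.mem_mk_left _ _, hfst ▸ Sym2.mem_mk_left _ _⟩ (hd.trans hd'.symm)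
  rw [card_filter_dart_edge_eq_two_mul G (fun e => ce e = c)] at hfst ⊢
  omega

theorem three_mul_card_le_two_mul [DecidableEq V]
    (h : IsHarmoniousTotalColoring (⊤ : SimpleGraph V) k cv ce) (hV : 2 ≤ Fintype.card V) :
    3 * Fintype.card V ≤ 2 * k := by
  set n := Fintype.card V
  set t : Fin k → ℕ := fun c => #{d : (⊤ : SimpleGraph V).Dart | ce d.edge = c}
  set A := univ.image cv
  have hA : #A = n := card_image_of_injective _ h.injective_of_top
  have hnk : n ≤ k := by simpa [hA] using card_le_univ A
  have hdarts : n * (n - 1) = ∑ c ∈ A, t c + ∑ c ∈ Aᶜ, t c := by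
    rw [sum_add_sum_compl, ← card_eq_sum_card_fiberwise fun _ _ => mem_univ _, card_univ,
      dart_card_eq_sum_degrees]
    simp [n]
  have hvertex : ∑ c ∈ A, t c ≤ n * (k - n) := by
    rw [sum_image fun u _ v _ huv => h.injective_of_top huv]
    refine (sum_le_card_nsmul _ _ (k - n) fun v _ => ?_).trans (by simp [n])
    show #{d : (⊤ : SimpleGraph V).Dart | ce d.edge = cv v} ≤ k - n
    have hv := h.degree_add_card_filter_color_le v
    have hdeg : (⊤ : SimpleGraph V).degree v = n - 1 := complete_graph_degree v
    omega
  have hedge : ∑ c ∈ Aᶜ, t c ≤ (k - n) * (2 * (n / 2)) := by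
    refine (sum_le_card_nsmul _ _ _ fun c _ => h.card_filter_color_le c).trans ?_
    rw [card_compl, hA, Fintype.card_fin, smul_eq_mul]
  have hextra := Nat.le_two_mul_of_mul_pred_le hV (hdarts ▸ add_le_add hvertex hedge)
  omega

end IsHarmoniousTotalColoring

/-- For every integer `n ≥ 2`, `h_t(K_n) ≥ 3n/2`. -/
theorem ht_complete_graph_lower (n : ℕ) (hn : 2 ≤ n) :
    (3 * n : ℚ) / 2 ≤ (harmoniousTotalChromaticNumber (⊤ : SimpleGraph (Fin n)) : ℚ) := by
  obtain ⟨cv, ce, h⟩ :=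
    Nat.sInf_mem (exists_isHarmoniousTotalColoring (⊤ : SimpleGraph (Fin n)))
  have hk := h.three_mul_card_le_two_mul (by simpa using hn)
  rw [Fintype.card_fin] at hk
  rw [div_le_iff₀ two_pos]
  exact_mod_cast hk.trans_eq (mul_comm _ _)
end

section
/- For every integer k ≥ 1, the harmonious total chromatic number of the complete graph K_{4k+2} equals 6k+3; in particular, K_{4k+2} admits a harmonious total colouring with 6k+3 colours. -/
section Construction


variable (k : ℕ)

def crossC (i j : ZMod (2*k+1)) : ZMod (2*k+1) × Fin 3 :=
  if j = i then (i, 2)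
  else if (j - i).val ≤ k then (2*j - i, 0) else (2*i - j - 1, 1)

def FC (u v : ZMod (2*k+1) × Bool) : ZMod (2*k+1) × Fin 3 :=
  if u.2 = v.2 then ((u.1 + v.1) * ((k : ZMod (2*k+1))+1), 2)
  else if u.2 then crossC k v.1 u.1 else crossC k u.1 v.1

def cvC (u : ZMod (2*k+1) × Bool) : ZMod (2*k+1) × Fin 3 :=
  (u.1, if u.2 then 1 else 0)

lemma two_mul_invC : (2 : ZMod (2*k+1)) * ((k : ZMod (2*k+1))+1) = 1 := by
  have h := ZMod.natCast_self (2*k+1)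
  push_cast at h
  linear_combination h

lemma two_mul_injC {a b : ZMod (2*k+1)} (h : 2*a = 2*b) : a = b := by
  linear_combination ((k : ZMod (2*k+1))+1)*h - (a-b)*two_mul_invC k

lemma mul_i_injC {a b : ZMod (2*k+1)}
    (h : a * ((k : ZMod (2*k+1))+1) = b * ((k : ZMod (2*k+1))+1)) : a = b := by
  linear_combination 2*h - (a-b)*two_mul_invC k

lemma fin20 : (2 : Fin 3) ≠ 0 := by decide
lemma fin21 : (2 : Fin 3) ≠ 1 := by decide
lemma fin01 : (0 : Fin 3) ≠ 1 := by decide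


lemma crossC_cases (i j : ZMod (2*k+1)) :
    (j = i ∧ crossC k i j = (i, 2)) ∨
    (j ≠ i ∧ (j-i).val ≤ k ∧ crossC k i j = (2*j - i, 0)) ∨
    (j ≠ i ∧ ¬ (j-i).val ≤ k ∧ crossC k i j = (2*i - j - 1, 1)) := by
  unfold crossC
  split_ifs with h1 h2
  · exact Or.inl ⟨h1, rfl⟩
  · exact Or.inr (Or.inl ⟨h1, h2, rfl⟩)
  · exact Or.inr (Or.inr ⟨h1, h2, rfl⟩)

lemma crossC_inj_snd {i j j' : ZMod (2*k+1)} (h : crossC k i j = crossC k i j') : j = j' := by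
  rcases crossC_cases k i j with ⟨e1, e2⟩ | ⟨e1, e1', e2⟩ | ⟨e1, e1', e2⟩ <;>
    rcases crossC_cases k i j' with ⟨f1, f2⟩ | ⟨f1, f1', f2⟩ | ⟨f1, f1', f2⟩ <;>
      rw [e2, f2, Prod.mk.injEq] at h
  · exact e1.trans f1.symm
  · exact absurd h.2 (fin20 )
  · exact absurd h.2 (fin21 )
  · exact absurd h.2.symm (fin20 )
  · exact two_mul_injC k (by linear_combination h.1)
  · exact absurd h.2 (fin01 )
  · exact absurd h.2.symm (fin21 )
  · exact absurd h.2.symm (fin01 )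
  · have h9 : j - j' = 0 := by linear_combination -h.1
    exact sub_eq_zero.mp h9

lemma crossC_inj_fst {i i' j : ZMod (2*k+1)} (h : crossC k i j = crossC k i' j) : i = i' := by
  rcases crossC_cases k i j with ⟨e1, e2⟩ | ⟨e1, e1', e2⟩ | ⟨e1, e1', e2⟩ <;>
    rcases crossC_cases k i' j with ⟨f1, f2⟩ | ⟨f1, f1', f2⟩ | ⟨f1, f1', f2⟩ <;>
      rw [e2, f2, Prod.mk.injEq] at h
  · exact h.1
  · exact absurd h.2 (fin20 )
  · exact absurd h.2 (fin21 )
  · exact absurd h.2.symm (fin20 )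
  · have h9 : i - i' = 0 := by linear_combination -h.1
    exact sub_eq_zero.mp h9
  · exact absurd h.2 (fin01 )
  · exact absurd h.2.symm (fin21 )
  · exact absurd h.2.symm (fin01 )
  · exact two_mul_injC k (by linear_combination h.1)

lemma crossC_ne0 {i j : ZMod (2*k+1)} : crossC k i j ≠ (i, 0) := by
  rcases crossC_cases k i j with ⟨e1, e2⟩ | ⟨e1, e1', e2⟩ | ⟨e1, e1', e2⟩ <;>
    rw [e2, Ne, Prod.mk.injEq] <;> rintro ⟨h5, h6⟩
  · exact fin20 h6
  · exact e1 (two_mul_injC k (by linear_combination h5))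
  · exact fin01 h6.symm

lemma crossC_ne1 {i j : ZMod (2*k+1)} : crossC k i j ≠ (j, 1) := by
  rcases crossC_cases k i j with ⟨e1, e2⟩ | ⟨e1, e1', e2⟩ | ⟨e1, e1', e2⟩ <;>
    rw [e2, Ne, Prod.mk.injEq] <;> rintro ⟨h5, h6⟩
  · exact fin21 h6
  · exact fin01 h6
  · apply e1'
    have hji : j - i = (k : ZMod (2*k+1)) := by
      have h7 : 2*(i-j) = 2*((k : ZMod (2*k+1))+1) := by
        rw [show (2:ZMod (2*k+1))*((k : ZMod (2*k+1))+1) = 1 from two_mul_invC k]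
        linear_combination h5
      have h8 : i - j = (k : ZMod (2*k+1))+1 := two_mul_injC k h7
      have h9 := ZMod.natCast_self (2*k+1)
      push_cast at h9
      linear_combination -h8 - h9
    rw [hji, ZMod.val_cast_of_lt (by omega)]
lemma crossA {i j c : ZMod (2*k+1)} (h : crossC k i j = (c, 0)) :
    ((c-i).val % 2 = 0 ∧ 1 ≤ (c-i).val ∧ (c-i).val ≤ 2*k) ∧
    (1 ≤ (c-j).val ∧ (c-j).val ≤ k) := by
  unfold crossC at h
  split_ifs at h with h1 h2
  · simp [Prod.ext_iff] at h
  · rw [Prod.mk.injEq] at h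
    obtain ⟨hc, -⟩ := h
    have hd0 : (j - i) ≠ 0 := sub_ne_zero.mpr h1
    have hd1 : (j-i).val ≠ 0 := fun hh => hd0 ((ZMod.val_eq_zero _).mp hh)
    have e1 : c - j = j - i := by linear_combination -hc
    have e2 : c - i = (j-i) + (j-i) := by linear_combination -hc
    have e3 : (c - i).val = (j-i).val + (j-i).val := by
      rw [e2, ZMod.val_add, Nat.mod_eq_of_lt (by omega)]
    rw [e1, e3]
    omega
  · simp [Prod.ext_iff] at h

lemma crossB (hk : 1 ≤ k) {i j c : ZMod (2*k+1)} (h : crossC k i j = (c, 1)) :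
    (c-i).val < k ∧ (c-j).val % 2 = 1 := by
  have hm : Fact (1 < 2*k+1) := ⟨by omega⟩
  unfold crossC at h
  split_ifs at h with h1 h2
  · simp [Prod.ext_iff] at h
  · simp [Prod.ext_iff] at h
  · rw [Prod.mk.injEq] at h
    obtain ⟨hc, -⟩ := h
    push_neg at h2
    have hdlt := ZMod.val_lt (j - i)
    have e1 : c - i = -((j-i)+1) := by linear_combination -hc
    have e2 : c - j = -(2*(j-i)+1) := by linear_combination -hc
    constructor
    · rcases Nat.lt_or_ge (j-i).val (2*k) with h4 | h4
      · have v1 : ((j-i)+1).val = (j-i).val + 1 := by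
          rw [ZMod.val_add, ZMod.val_one, Nat.mod_eq_of_lt (by omega)]
        have hne : (j-i) + 1 ≠ 0 := by
          intro hh
          rw [hh, ZMod.val_zero] at v1; omega
        rw [e1, ZMod.neg_val, if_neg hne, v1]
        omega
      · have hv : (j-i).val = 2*k := by omega
        have hz : (j-i) + 1 = 0 := by
          have : ((j-i)+1).val = 0 := by
            rw [ZMod.val_add, ZMod.val_one, hv]
            simp
          exact (ZMod.val_eq_zero _).mp this
        rw [e1, hz, neg_zero, ZMod.val_zero]
        omega
    · have v2 : (2*(j-i)).val = (j-i).val + (j-i).val - (2*k+1) := by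
        have ht : (2*(j-i) : ZMod (2*k+1)) = (j-i)+(j-i) := two_mul _
        rw [ht, ZMod.val_add]
        have hb : (j-i).val + (j-i).val < 2*(2*k+1) := by omega
        have ha : 2*k+1 ≤ (j-i).val + (j-i).val := by omega
        rw [Nat.mod_eq_sub_mod ha, Nat.mod_eq_of_lt (by omega)]
      have v3 : (2*(j-i)+1).val = (2*(j-i)).val + 1 := by
        rw [ZMod.val_add, ZMod.val_one, Nat.mod_eq_of_lt (by omega)]
      have hne : 2*(j-i)+1 ≠ 0 := by
        intro hh
        rw [hh, ZMod.val_zero] at v3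
        omega
      rw [e2, ZMod.neg_val, if_neg hne, v3, v2]
      omega

lemma FC_symm (u v : ZMod (2*k+1) × Bool) : FC k u v = FC k v u := by
  obtain ⟨i, a⟩ := u; obtain ⟨j, b⟩ := v
  cases a <;> cases b <;> simp [FC, add_comm]

lemma val_negC {x : ZMod (2*k+1)} (h : x ≠ 0) : (-x).val = 2*k+1 - x.val := by
  rw [ZMod.neg_val, if_neg h]

-- properness at a vertex
lemma FC_inj (v u u' : ZMod (2*k+1) × Bool) (hu : u ≠ v) (hu' : u' ≠ v)
    (h : FC k v u = FC k v u') : u = u' := by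
  obtain ⟨i, a⟩ := v; obtain ⟨j, b⟩ := u; obtain ⟨j', b'⟩ := u'
  cases a <;> cases b <;> cases b' <;> simp only [FC] at h <;> norm_num at h ⊢
  · have h9 := mul_i_injC k h
    linear_combination h9
  · rcases crossC_cases k i j' with ⟨e1, e2⟩ | ⟨e1, e1', e2⟩ | ⟨e1, e1', e2⟩ <;>
      rw [e2, Prod.mk.injEq] at h
    · have e : (2*i : ZMod (2*k+1))*((k : ZMod (2*k+1))+1) = i := by
        rw [mul_comm 2 i, mul_assoc, two_mul_invC k, mul_one]
      have h9 := mul_i_injC k (h.1.trans e.symm)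
      exact hu (by rw [show j = i from by linear_combination h9])
    · exact fin20 h.2
    · exact fin21 h.2
  · rcases crossC_cases k i j with ⟨e1, e2⟩ | ⟨e1, e1', e2⟩ | ⟨e1, e1', e2⟩ <;>
      rw [e2, Prod.mk.injEq] at h
    · have e : (2*i : ZMod (2*k+1))*((k : ZMod (2*k+1))+1) = i := by
        rw [mul_comm 2 i, mul_assoc, two_mul_invC k, mul_one]
      have h9 := mul_i_injC k (h.1.symm.trans e.symm)
      exact hu' (by rw [show j' = i from by linear_combination h9])
    · exact fin20 h.2.symm
    · exact fin21 h.2.symm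
  · exact crossC_inj_snd k h
  · exact crossC_inj_fst k h
  · rcases crossC_cases k j i with ⟨e1, e2⟩ | ⟨e1, e1', e2⟩ | ⟨e1, e1', e2⟩ <;>
      rw [e2, Prod.mk.injEq] at h
    · have e : (2*j : ZMod (2*k+1))*((k : ZMod (2*k+1))+1) = j := by
        rw [mul_comm 2 j, mul_assoc, two_mul_invC k, mul_one]
      have h9 := mul_i_injC k (e.trans h.1)
      exact hu' (by rw [show j' = i from by linear_combination -h9 - 2*e1])
    · exact fin20 h.2.symm
    · exact fin21 h.2.symm
  · rcases crossC_cases k j' i with ⟨e1, e2⟩ | ⟨e1, e1', e2⟩ | ⟨e1, e1', e2⟩ <;>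
      rw [e2, Prod.mk.injEq] at h
    · have e : (2*j' : ZMod (2*k+1))*((k : ZMod (2*k+1))+1) = j' := by
        rw [mul_comm 2 j', mul_assoc, two_mul_invC k, mul_one]
      have h9 := mul_i_injC k (h.1.trans e.symm)
      exact hu (by rw [show j = i from by linear_combination h9 - 2*e1])
    · exact fin20 h.2
    · exact fin21 h.2
  · have h9 := mul_i_injC k h
    linear_combination h9

lemma FC_ne_cv (u v : ZMod (2*k+1) × Bool) : FC k u v ≠ cvC k u := by
  obtain ⟨i, a⟩ := u; obtain ⟨j, b⟩ := v
  cases a <;> cases b <;> simp only [FC, cvC] <;> norm_num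
  · intro _ h; exact fin20 h
  · exact crossC_ne0 k
  · exact crossC_ne1 k
  · intro _ h; exact fin21 h

lemma FC_ne_cv' (u v : ZMod (2*k+1) × Bool) : FC k u v ≠ cvC k v := by
  rw [FC_symm]; exact FC_ne_cv k v u

lemma FC_antisym (hk : 1 ≤ k) {v w u u' : ZMod (2*k+1) × Bool}
    (h1 : FC k v u = cvC k w) (h2 : FC k w u' = cvC k v) : False := by
  obtain ⟨i, a⟩ := v; obtain ⟨c, b⟩ := w; obtain ⟨j, ua⟩ := u; obtain ⟨j', ub⟩ := u'
  cases a <;> cases b <;> cases ua <;> cases ub <;>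
    simp only [FC, cvC] at h1 h2 <;> norm_num at h1 h2
  all_goals try (exact absurd h1.2 (by decide))
  all_goals try (exact absurd h2.2 (by decide))
  -- remaining: v,u layers differ AND w,u' layers differ; 4 main cases
  · -- v=(i,ff) w=(c,ff): h1 : crossC k i j = (c,0), h2 : crossC k c j' = (i,0)
    obtain ⟨⟨p1, p2, p3⟩, -⟩ := crossA k h1
    obtain ⟨⟨q1, q2, q3⟩, -⟩ := crossA k h2
    have hne : (c - i) ≠ 0 := fun hh => by rw [hh, ZMod.val_zero] at p2; omega
    have e : i - c = -(c - i) := by ring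
    rw [e, val_negC k hne] at q1 q2 q3
    omega
  · -- v=(i,ff) w=(c,tt): h1 : crossC k i j = (c,1), h2 : crossC k j' c = (i,0)
    obtain ⟨p1, -⟩ := crossB k hk h1
    obtain ⟨-, q1, q2⟩ := crossA k h2
    rcases eq_or_ne (c - i) 0 with h0 | h0
    · have : i - c = 0 := by linear_combination -h0
      rw [this, ZMod.val_zero] at q1; omega
    · have e : i - c = -(c - i) := by ring
      rw [e, val_negC k h0] at q1 q2
      have := ZMod.val_lt (c - i)
      omega
  · -- v=(i,tt) w=(c,ff): h1 : crossC k j c... careful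
    obtain ⟨-, p1, p2⟩ := crossA k h1
    obtain ⟨q1, -⟩ := crossB k hk h2
    rcases eq_or_ne (c - i) 0 with h0 | h0
    · rw [h0, ZMod.val_zero] at p1; omega
    · have e : i - c = -(c - i) := by ring
      rw [e, val_negC k h0] at q1
      have := ZMod.val_lt (c - i)
      omega
  · -- v=(i,tt) w=(c,tt): both odd
    obtain ⟨-, p1⟩ := crossB k hk h1
    obtain ⟨-, q1⟩ := crossB k hk h2
    have hne : (c - i) ≠ 0 := fun hh => by rw [hh, ZMod.val_zero] at p1; omega
    have e : i - c = -(c - i) := by ring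
    rw [e, val_negC k hne] at q1
    have := ZMod.val_lt (c - i)
    omega


end Construction

lemma transferHTC {V W C : Type*} (qV : W ≃ V) {t : ℕ} (qC : C ≃ Fin t)
    (cv : V → C) (F : V → V → C) (hF : ∀ a b, F a b = F b a)
    (h1 : ∀ u v : V, u ≠ v → cv u ≠ cv v)
    (h2 : ∀ v a b : V, a ≠ v → b ≠ v → F v a = F v b → a = b)
    (h3 : ∀ u v : V, F u v ≠ cv u)
    (h4 : ∀ v w a b : V, F v a = cv w → F w b = cv v → False) :
    IsHarmoniousTotalColoring (⊤ : SimpleGraph W) t (fun x => qC (cv (qV x)))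
      (fun e => qC (Sym2.lift ⟨fun a b => F a b, hF⟩ (e.map qV))) := by
  set ce' : Sym2 V → C := Sym2.lift ⟨fun a b => F a b, hF⟩ with hce'
  have hlift : ∀ a b : V, ce' s(a, b) = F a b := fun a b => rfl
  refine ⟨?_, ?_, ?_, ?_⟩
  · intro u v hadj
    rw [SimpleGraph.top_adj] at hadj
    intro hh
    exact h1 _ _ (fun he => hadj (qV.injective he)) (qC.injective hh)
  · intro e f he hf hef ⟨v, hve, hvf⟩
    obtain ⟨a, ha⟩ : ∃ a, s(v, a) = e := ⟨Sym2.Mem.other hve, Sym2.other_spec hve⟩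
    obtain ⟨b, hb⟩ : ∃ b, s(v, b) = f := ⟨Sym2.Mem.other hvf, Sym2.other_spec hvf⟩
    subst ha; subst hb
    rw [SimpleGraph.mem_edgeSet, SimpleGraph.top_adj] at he hf
    intro hh
    apply hef
    have hab : qV a = qV b := by
      apply h2 (qV v) _ _ (fun hc => he (qV.injective hc).symm)
        (fun hc => hf (qV.injective hc).symm)
      have := qC.injective hh
      simpa [Sym2.map_pair_eq, hlift] using this
    rw [qV.injective hab]
  · intro v e he hv
    obtain ⟨a, ha⟩ : ∃ a, s(v, a) = e := ⟨Sym2.Mem.other hv, Sym2.other_spec hv⟩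
    subst ha
    intro hh
    have := qC.injective hh
    apply h3 (qV v) (qV a)
    simpa [Sym2.map_pair_eq, hlift] using this.symm
  · intro v e w f he hf hv hw hpair
    obtain ⟨a, ha⟩ : ∃ a, s(v, a) = e := ⟨Sym2.Mem.other hv, Sym2.other_spec hv⟩
    obtain ⟨b, hb⟩ : ∃ b, s(w, b) = f := ⟨Sym2.Mem.other hw, Sym2.other_spec hw⟩
    subst ha; subst hb
    rw [SimpleGraph.mem_edgeSet, SimpleGraph.top_adj] at he hf
    have hma : (s(v,a) : Sym2 W).map qV = s(qV v, qV a) := Sym2.map_pair_eq _ _ _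
    have hmb : (s(w,b) : Sym2 W).map qV = s(qV w, qV b) := Sym2.map_pair_eq _ _ _
    simp only [hma, hmb, hlift] at hpair
    rw [Sym2.eq_iff] at hpair
    rcases hpair with ⟨hc1, hc2⟩ | ⟨hc1, hc2⟩
    · have hvw : qV v = qV w := by
        by_contra hne
        exact h1 _ _ hne (qC.injective hc1)
      have hvw' : v = w := qV.injective hvw
      subst hvw'
      have hab : a = b := by
        apply qV.injective
        exact h2 (qV v) _ _ (fun hc => he (qV.injective hc).symm)
          (fun hc => hf (qV.injective hc).symm) (qC.injective hc2)
      exact ⟨rfl, by rw [hab]⟩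
    · exfalso
      exact h4 (qV v) (qV w) (qV a) (qV b) (qC.injective hc2) (qC.injective hc1).symm

lemma cvC_inj (k : ℕ) : ∀ u v : ZMod (2*k+1) × Bool, u ≠ v → cvC k u ≠ cvC k v := by
  rintro ⟨i, a⟩ ⟨j, b⟩ hne h
  have h1 : i = j := congrArg Prod.fst h
  have h2 : (if a then (1 : Fin 3) else 0) = (if b then 1 else 0) := congrArg Prod.snd h
  have h3 : a = b := by
    cases a <;> cases b <;> first | rfl | exact absurd h2 (by decide)
  exact hne (by rw [h1, h3])

lemma existsHTC (k : ℕ) (hk : 1 ≤ k) :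
    ∃ cv ce, IsHarmoniousTotalColoring (⊤ : SimpleGraph (Fin (4*k+2))) (6*k+3) cv ce := by
  have cV : Fintype.card (ZMod (2*k+1) × Bool) = 4*k+2 := by
    rw [Fintype.card_prod, ZMod.card, Fintype.card_bool]; ring
  have cC : Fintype.card (ZMod (2*k+1) × Fin 3) = 6*k+3 := by
    rw [Fintype.card_prod, ZMod.card, Fintype.card_fin]; ring
  refine ⟨_, _, transferHTC (Fintype.equivFinOfCardEq cV).symm (Fintype.equivFinOfCardEq cC)
    (cvC k) (FC k) (FC_symm k) (cvC_inj k) (FC_inj k) (FC_ne_cv k) ?_⟩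
  intro v w a b hh1 hh2
  exact FC_antisym k hk hh1 hh2

lemma lowerHTC (k t : ℕ) (hk : 1 ≤ k)
    (cv : Fin (4*k+2) → Fin t) (ce : Sym2 (Fin (4*k+2)) → Fin t)
    (h : IsHarmoniousTotalColoring (⊤ : SimpleGraph (Fin (4*k+2))) t cv ce) :
    6*k+3 ≤ t := by
  obtain ⟨h1, h2, h3, h4⟩ := h
  have hedge : ∀ p : Fin (4*k+2) × Fin (4*k+2), p.1 ≠ p.2 →
      s(p.1, p.2) ∈ (⊤ : SimpleGraph (Fin (4*k+2))).edgeSet := by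
    intro p hp
    rw [SimpleGraph.mem_edgeSet, SimpleGraph.top_adj]
    exact hp
  have hcvinj : Function.Injective cv := by
    intro a b hab
    by_contra hne
    exact h1 a b (by rw [SimpleGraph.top_adj]; exact hne) hab
  classical
  set S : Finset (Fin (4*k+2) × Fin (4*k+2)) := Finset.univ.filter (fun p => p.1 ≠ p.2) with hS
  set φ : Fin (4*k+2) × Fin (4*k+2) → Fin t × Fin t :=
    fun p => (cv p.1, ce s(p.1, p.2)) with hφ
  have hφinj : Set.InjOn φ S := by
    intro p hp q hq hpq
    rw [hS, Finset.coe_filter] at hp hq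
    have hp' : p.1 ≠ p.2 := hp.2
    have hq' : q.1 ≠ q.2 := hq.2
    have hpq1 : cv p.1 = cv q.1 := congrArg Prod.fst hpq
    have hpq2 : ce s(p.1,p.2) = ce s(q.1,q.2) := congrArg Prod.snd hpq
    have hpair : s(cv p.1, ce s(p.1, p.2)) = s(cv q.1, ce s(q.1, q.2)) := by
      rw [hpq1, hpq2]
    obtain ⟨hv, he⟩ := h4 p.1 s(p.1,p.2) q.1 s(q.1,q.2) (hedge p hp') (hedge q hq')
      (Sym2.mem_mk_left _ _) (Sym2.mem_mk_left _ _) hpair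
    have h2nd : p.2 = q.2 := by
      rw [hv] at he
      exact Sym2.congr_right.mp he
    exact Prod.ext hv h2nd
  set I : Finset (Fin t × Fin t) := S.image φ with hI
  -- (a,a) never in I
  have hdiagI : ∀ a : Fin t, (a, a) ∉ I := by
    intro a ha
    rw [hI, Finset.mem_image] at ha
    obtain ⟨p, hp, hpa⟩ := ha
    rw [hS, Finset.mem_filter] at hp
    have e1 : cv p.1 = a := congrArg Prod.fst hpa
    have e2 : ce s(p.1, p.2) = a := congrArg Prod.snd hpa
    exact h3 p.1 s(p.1,p.2) (hedge p hp.2) (Sym2.mem_mk_left _ _) (e1.trans e2.symm)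
  -- antisymmetry: not both (a,b) and (b,a) in I
  have hanti : ∀ a b : Fin t, (a, b) ∈ I → (b, a) ∈ I → False := by
    intro a b hab hba
    rcases eq_or_ne a b with rfl | hne
    · exact hdiagI a hab
    rw [hI, Finset.mem_image] at hab hba
    obtain ⟨p, hp, hpa⟩ := hab
    obtain ⟨q, hq, hqa⟩ := hba
    rw [hS, Finset.mem_filter] at hp hq
    have e1 : cv p.1 = a := congrArg Prod.fst hpa
    have e2 : ce s(p.1, p.2) = b := congrArg Prod.snd hpa
    have f1 : cv q.1 = b := congrArg Prod.fst hqa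
    have f2 : ce s(q.1, q.2) = a := congrArg Prod.snd hqa
    have hpair : s(cv p.1, ce s(p.1, p.2)) = s(cv q.1, ce s(q.1, q.2)) := by
      rw [e1, e2, f1, f2, Sym2.eq_swap]
    obtain ⟨hv, -⟩ := h4 p.1 s(p.1,p.2) q.1 s(q.1,q.2) (hedge p hp.2) (hedge q hq.2)
      (Sym2.mem_mk_left _ _) (Sym2.mem_mk_left _ _) hpair
    rw [hv, f1] at e1
    exact hne e1.symm
  -- cardinality of I
  have hScard : S.card = (4*k+2) * (4*k+1) := by
    have hfib : S.card = ∑ a : Fin (4*k+2), (S.filter (fun p => p.1 = a)).card :=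
      Finset.card_eq_sum_card_fiberwise (fun x _ => Finset.mem_univ _)
    have hone : ∀ a : Fin (4*k+2), (S.filter (fun p => p.1 = a)).card = 4*k+1 := by
      intro a
      have : S.filter (fun p => p.1 = a) = (Finset.univ.erase a).image (fun b => (a, b)) := by
        ext ⟨x, y⟩
        simp only [hS, Finset.mem_filter, Finset.mem_univ, true_and, Finset.mem_image,
          Finset.mem_erase]
        constructor
        · rintro ⟨hxy, rfl⟩
          exact ⟨y, ⟨fun hh => hxy hh.symm, trivial⟩, rfl⟩
        · rintro ⟨b, ⟨hb, -⟩, hab⟩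
          rw [Prod.mk.injEq] at hab
          obtain ⟨rfl, rfl⟩ := hab
          exact ⟨fun hh => hb hh.symm, rfl⟩
      rw [this, Finset.card_image_of_injective _ (fun x y hxy => congrArg Prod.snd hxy),
        Finset.card_erase_of_mem (Finset.mem_univ _), Finset.card_univ, Fintype.card_fin]
      omega
    rw [hfib]
    simp only [hone, Finset.sum_const, Finset.card_univ, Fintype.card_fin, smul_eq_mul]
  have hIcard : I.card = (4*k+2) * (4*k+1) := by
    rw [hI, Finset.card_image_of_injOn hφinj, hScard]
  -- rows and columns
  set row : Fin t → Finset (Fin t) := fun a => (I.filter (fun p => p.1 = a)).image Prod.snd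
    with hrow
  set col : Fin t → Finset (Fin t) := fun a => (I.filter (fun p => p.2 = a)).image Prod.fst
    with hcol
  have hrowcard : ∀ a, (row a).card = (I.filter (fun p => p.1 = a)).card := by
    intro a
    rw [hrow]
    apply Finset.card_image_of_injOn
    intro p hp q hq hpq
    rw [Finset.mem_coe, Finset.mem_filter] at hp hq
    exact Prod.ext (hp.2.trans hq.2.symm) hpq
  have hcolcard : ∀ a, (col a).card = (I.filter (fun p => p.2 = a)).card := by
    intro a
    rw [hcol]
    apply Finset.card_image_of_injOn
    intro p hp q hq hpq
    rw [Finset.mem_coe, Finset.mem_filter] at hp hq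
    exact Prod.ext hpq (hp.2.trans hq.2.symm)
  have hsum : ∑ a : Fin t, ((row a).card + (col a).card) = 2 * ((4*k+2) * (4*k+1)) := by
    rw [Finset.sum_add_distrib]
    have e1 : ∑ a : Fin t, (row a).card = I.card := by
      simp only [hrowcard]
      exact (Finset.card_eq_sum_card_fiberwise (fun x _ => Finset.mem_univ _)).symm
    have e2 : ∑ a : Fin t, (col a).card = I.card := by
      simp only [hcolcard]
      exact (Finset.card_eq_sum_card_fiberwise (fun x _ => Finset.mem_univ _)).symm
    rw [e1, e2, hIcard]
    ring
  -- per-colour bound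
  have hbound : ∀ a : Fin t, (row a).card + (col a).card ≤ t - 1 := by
    intro a
    have hdisj : Disjoint (row a) (col a) := by
      rw [Finset.disjoint_left]
      intro b hb hb'
      rw [hrow, Finset.mem_image] at hb
      rw [hcol, Finset.mem_image] at hb'
      obtain ⟨p, hp, hp2⟩ := hb
      obtain ⟨q, hq, hq2⟩ := hb'
      rw [Finset.mem_filter] at hp hq
      have hpI : (a, b) ∈ I := by
        have he : p = (a, b) := Prod.ext hp.2 hp2
        have hp1 := hp.1
        rwa [he] at hp1
      have hqI : (b, a) ∈ I := by
        have he : q = (b, a) := Prod.ext hq2 hq.2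
        have hq1 := hq.1
        rwa [he] at hq1
      exact hanti a b hpI hqI
    have hsub : row a ∪ col a ⊆ Finset.univ.erase a := by
      intro b hb
      rw [Finset.mem_erase]
      refine ⟨fun hba => ?_, Finset.mem_univ _⟩
      rw [hba] at hb
      rw [Finset.mem_union] at hb
      rcases hb with hb | hb
      · rw [hrow, Finset.mem_image] at hb
        obtain ⟨p, hp, hp2⟩ := hb
        rw [Finset.mem_filter] at hp
        have he : p = (a, a) := Prod.ext hp.2 hp2
        exact hdiagI a (he ▸ hp.1)
      · rw [hcol, Finset.mem_image] at hb
        obtain ⟨p, hp, hp2⟩ := hb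
        rw [Finset.mem_filter] at hp
        have he : p = (a, a) := Prod.ext hp2 hp.2
        exact hdiagI a (he ▸ hp.1)
    calc (row a).card + (col a).card = (row a ∪ col a).card :=
          (Finset.card_union_of_disjoint hdisj).symm
      _ ≤ (Finset.univ.erase a).card := Finset.card_le_card hsub
      _ = t - 1 := by rw [Finset.card_erase_of_mem (Finset.mem_univ _), Finset.card_univ,
          Fintype.card_fin]
  -- columns land in vertex colours
  set VC : Finset (Fin t) := Finset.univ.image cv with hVC
  have hVCcard : VC.card = 4*k+2 := by
    rw [hVC, Finset.card_image_of_injective _ hcvinj, Finset.card_univ, Fintype.card_fin]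
  have hcolsub : ∀ a, col a ⊆ VC := by
    intro a b hb
    rw [hcol, Finset.mem_image] at hb
    obtain ⟨p, hp, hp2⟩ := hb
    rw [Finset.mem_filter] at hp
    have := hp.1
    rw [hI, Finset.mem_image] at this
    obtain ⟨q, hq, hq2⟩ := this
    rw [hVC, Finset.mem_image]
    exact ⟨q.1, Finset.mem_univ _, by rw [← hp2, ← hq2]⟩
  have hcolle : ∀ a, (col a).card ≤ 4*k+2 := by
    intro a
    calc (col a).card ≤ VC.card := Finset.card_le_card (hcolsub a)
      _ = 4*k+2 := hVCcard
  have hrowempty : ∀ a : Fin t, a ∉ VC → (row a).card = 0 := by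
    intro a ha
    rw [Finset.card_eq_zero, hrow, Finset.image_eq_empty]
    rw [Finset.filter_eq_empty_iff]
    intro p hp
    intro hpa
    apply ha
    rw [hI, Finset.mem_image] at hp
    obtain ⟨q, hq, hq2⟩ := hp
    rw [hVC, Finset.mem_image]
    refine ⟨q.1, Finset.mem_univ _, ?_⟩
    rw [← hpa, ← hq2]
  -- put it together
  have hVCsub : VC ⊆ Finset.univ := Finset.subset_univ _
  have htge : 4*k+2 ≤ t := by
    calc 4*k+2 = VC.card := hVCcard.symm
      _ ≤ Finset.univ.card := Finset.card_le_card hVCsub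
      _ = t := by rw [Finset.card_univ, Fintype.card_fin]
  have hsplit : ∑ a : Fin t, ((row a).card + (col a).card)
      ≤ VC.card * (t-1) + (t - (4*k+2)) * (4*k+2) := by
    rw [← Finset.sum_filter_add_sum_filter_not Finset.univ (fun a => a ∈ VC)]
    have e1 : Finset.univ.filter (fun a => a ∈ VC) = VC := by
      ext a; simp
    have b1 : ∑ a ∈ Finset.univ.filter (fun a => a ∈ VC), ((row a).card + (col a).card)
        ≤ VC.card * (t-1) := by
      rw [e1]
      calc ∑ a ∈ VC, ((row a).card + (col a).card) ≤ ∑ a ∈ VC, (t-1) :=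
            Finset.sum_le_sum (fun a _ => hbound a)
        _ = VC.card * (t-1) := by rw [Finset.sum_const, smul_eq_mul]
    have b2 : ∑ a ∈ Finset.univ.filter (fun a => a ∉ VC), ((row a).card + (col a).card)
        ≤ (t - (4*k+2)) * (4*k+2) := by
      have hc : (Finset.univ.filter (fun a => a ∉ VC)).card = t - (4*k+2) := by
        have := Finset.card_filter_add_card_filter_not
          (s := (Finset.univ : Finset (Fin t))) (p := fun a => a ∈ VC)
        rw [e1] at this
        have ht : (Finset.univ : Finset (Fin t)).card = t := by
          rw [Finset.card_univ, Fintype.card_fin]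
        omega
      calc ∑ a ∈ Finset.univ.filter (fun a => a ∉ VC), ((row a).card + (col a).card)
          ≤ ∑ a ∈ Finset.univ.filter (fun a => a ∉ VC), (4*k+2) := by
            apply Finset.sum_le_sum
            intro a ha
            rw [Finset.mem_filter] at ha
            rw [hrowempty a ha.2]
            simpa using hcolle a
        _ = (t - (4*k+2)) * (4*k+2) := by rw [Finset.sum_const, smul_eq_mul, hc]
    omega
  rw [hsum, hVCcard] at hsplit
  -- final arithmetic
  have key : 2*((4*k+2)*(4*k+1)) ≤ (4*k+2)*(t-1) + (t-(4*k+2))*(4*k+2) := hsplit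
  have : 2*(4*k+1) ≤ (t-1) + (t-(4*k+2)) := by
    have expand : (4*k+2)*(t-1) + (t-(4*k+2))*(4*k+2) = (4*k+2) * ((t-1) + (t-(4*k+2))) := by
      ring
    rw [expand] at key
    have := Nat.le_of_mul_le_mul_left (by linarith [key] : (4*k+2) * (2*(4*k+1)) ≤ (4*k+2) * ((t-1) + (t-(4*k+2)))) (by omega : 0 < 4*k+2)
    omega
  omega

/-- For every `k ≥ 1`, `h_t(K_{4k+2}) = 6k + 3`; in particular `K_{4k+2}` admits a
harmonious total colouring with `6k + 3` colours. -/
theorem ht_K_4k2 (k : ℕ) (hk : 1 ≤ k) :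
    harmoniousTotalChromaticNumber (⊤ : SimpleGraph (Fin (4 * k + 2))) = 6 * k + 3 ∧
    ∃ cv ce, IsHarmoniousTotalColoring (⊤ : SimpleGraph (Fin (4 * k + 2))) (6 * k + 3) cv ce := by
  have hex := existsHTC k hk
  have hex' : ∃ cv ce, IsHarmoniousTotalColoring (⊤ : SimpleGraph (Fin (4 * k + 2)))
      (6 * k + 3) cv ce := hex
  refine ⟨?_, hex'⟩
  apply le_antisymm
  · exact Nat.sInf_le hex'
  · apply le_csInf ⟨6*k+3, hex'⟩
    rintro b ⟨cvb, ceb, hb⟩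
    exact lowerHTC k b hk cvb ceb hb
end

section
/- For every integer k ≥ 1, the harmonious total chromatic number of the complete graph K_{4k+3} equals 6k+5; in particular, K_{4k+3} admits a harmonious total colouring with 6k+5 colours. -/
open Finset


/-- colour of edge {a,b} (a<b) in K_{4k+3} on vertices 0..4k+2 (4k+2 = ∞). -/
def Fval (k a b : ℕ) : ℕ :=
  if b = 4*k+2 then
    if a % 2 = 1 then
      (if a + 2*k+1 < 4*k+2 then a + 2*k + 1 else a - (2*k+1))
    else 4*k+3 + a/2
  else if b - a = 2*k+1 then 6*k+4
  else if (b - a) % 2 = 1 then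
    (if b - a < 2*k+1 then
       (if a + 2*(b-a) + 2*k+1 < 4*k+2 then a + 2*(b-a) + 2*k+1
        else if a + 2*(b-a) + 2*k+1 < 8*k+4 then a + 2*(b-a) + 2*k+1 - (4*k+2)
        else a + 2*(b-a) + 2*k+1 - (8*k+4))
     else
       (if b + 2*(4*k+2-(b-a)) + 2*k+1 < 8*k+4 then b + 2*(4*k+2-(b-a)) + 2*k+1 - (4*k+2)
        else b + 2*(4*k+2-(b-a)) + 2*k+1 - (8*k+4)))
  else
    (if b - a < 2*k+1 then
      (if (a + (b-a)/2) % 2 = 0 then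
        4*k+3 + (if (a + (b-a)/2)/2 < 2*k+1 then (a + (b-a)/2)/2 else (a + (b-a)/2)/2 - (2*k+1))
       else
        4*k+3 + (if (a + (b-a)/2 + 2*k+1)/2 < 2*k+1 then (a + (b-a)/2 + 2*k+1)/2 else (a + (b-a)/2 + 2*k+1)/2 - (2*k+1)))
     else
      (if (b + (4*k+2-(b-a))/2) % 2 = 0 then
        4*k+3 + (if (b + (4*k+2-(b-a))/2)/2 < 2*k+1 then (b + (4*k+2-(b-a))/2)/2 else (b + (4*k+2-(b-a))/2)/2 - (2*k+1))
       else
        4*k+3 + (if (b + (4*k+2-(b-a))/2 + 2*k+1)/2 < 2*k+1 then (b + (4*k+2-(b-a))/2 + 2*k+1)/2 else (b + (4*k+2-(b-a))/2 + 2*k+1)/2 - (2*k+1))))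

lemma Fval_lt (k a b : ℕ) (ha : a ≤ 4*k+2) (hb : b ≤ 4*k+2) : Fval k a b < 6*k+5 := by
  unfold Fval
  split_ifs <;> omega


def Qc (k a b c : ℕ) : Prop :=
  (b = 4*k+2 ∧ a % 2 = 1 ∧ a + 2*k+1 < 4*k+2 ∧ c = a + 2*k + 1) ∨
  (b = 4*k+2 ∧ a % 2 = 1 ∧ ¬(a + 2*k+1 < 4*k+2) ∧ c = a - (2*k+1)) ∨
  (b = 4*k+2 ∧ ¬(a % 2 = 1) ∧ c = 4*k+3 + a/2) ∨
  (¬(b = 4*k+2) ∧ b - a = 2*k+1 ∧ c = 6*k+4) ∨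
  (¬(b = 4*k+2) ∧ ¬(b - a = 2*k+1) ∧ (b - a) % 2 = 1 ∧ b - a < 2*k+1 ∧ a + 2*(b-a) + 2*k+1 < 4*k+2 ∧ c = a + 2*(b-a) + 2*k+1) ∨
  (¬(b = 4*k+2) ∧ ¬(b - a = 2*k+1) ∧ (b - a) % 2 = 1 ∧ b - a < 2*k+1 ∧ ¬(a + 2*(b-a) + 2*k+1 < 4*k+2) ∧ a + 2*(b-a) + 2*k+1 < 8*k+4 ∧ c = a + 2*(b-a) + 2*k+1 - (4*k+2)) ∨
  (¬(b = 4*k+2) ∧ ¬(b - a = 2*k+1) ∧ (b - a) % 2 = 1 ∧ b - a < 2*k+1 ∧ ¬(a + 2*(b-a) + 2*k+1 < 8*k+4) ∧ c = a + 2*(b-a) + 2*k+1 - (8*k+4)) ∨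
  (¬(b = 4*k+2) ∧ ¬(b - a = 2*k+1) ∧ (b - a) % 2 = 1 ∧ ¬(b - a < 2*k+1) ∧ b + 2*(4*k+2-(b-a)) + 2*k+1 < 8*k+4 ∧ c = b + 2*(4*k+2-(b-a)) + 2*k+1 - (4*k+2)) ∨
  (¬(b = 4*k+2) ∧ ¬(b - a = 2*k+1) ∧ (b - a) % 2 = 1 ∧ ¬(b - a < 2*k+1) ∧ ¬(b + 2*(4*k+2-(b-a)) + 2*k+1 < 8*k+4) ∧ c = b + 2*(4*k+2-(b-a)) + 2*k+1 - (8*k+4)) ∨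
  (¬(b = 4*k+2) ∧ ¬(b - a = 2*k+1) ∧ ¬((b - a) % 2 = 1) ∧ b - a < 2*k+1 ∧ (a + (b-a)/2) % 2 = 0 ∧ (a + (b-a)/2)/2 < 2*k+1 ∧ c = 4*k+3 + (a + (b-a)/2)/2) ∨
  (¬(b = 4*k+2) ∧ ¬(b - a = 2*k+1) ∧ ¬((b - a) % 2 = 1) ∧ b - a < 2*k+1 ∧ (a + (b-a)/2) % 2 = 0 ∧ ¬((a + (b-a)/2)/2 < 2*k+1) ∧ c = 4*k+3 + ((a + (b-a)/2)/2 - (2*k+1))) ∨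
  (¬(b = 4*k+2) ∧ ¬(b - a = 2*k+1) ∧ ¬((b - a) % 2 = 1) ∧ b - a < 2*k+1 ∧ ¬((a + (b-a)/2) % 2 = 0) ∧ (a + (b-a)/2 + 2*k+1)/2 < 2*k+1 ∧ c = 4*k+3 + (a + (b-a)/2 + 2*k+1)/2) ∨
  (¬(b = 4*k+2) ∧ ¬(b - a = 2*k+1) ∧ ¬((b - a) % 2 = 1) ∧ b - a < 2*k+1 ∧ ¬((a + (b-a)/2) % 2 = 0) ∧ ¬((a + (b-a)/2 + 2*k+1)/2 < 2*k+1) ∧ c = 4*k+3 + ((a + (b-a)/2 + 2*k+1)/2 - (2*k+1))) ∨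
  (¬(b = 4*k+2) ∧ ¬(b - a = 2*k+1) ∧ ¬((b - a) % 2 = 1) ∧ ¬(b - a < 2*k+1) ∧ (b + (4*k+2-(b-a))/2) % 2 = 0 ∧ (b + (4*k+2-(b-a))/2)/2 < 2*k+1 ∧ c = 4*k+3 + (b + (4*k+2-(b-a))/2)/2) ∨
  (¬(b = 4*k+2) ∧ ¬(b - a = 2*k+1) ∧ ¬((b - a) % 2 = 1) ∧ ¬(b - a < 2*k+1) ∧ (b + (4*k+2-(b-a))/2) % 2 = 0 ∧ ¬((b + (4*k+2-(b-a))/2)/2 < 2*k+1) ∧ c = 4*k+3 + ((b + (4*k+2-(b-a))/2)/2 - (2*k+1))) ∨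
  (¬(b = 4*k+2) ∧ ¬(b - a = 2*k+1) ∧ ¬((b - a) % 2 = 1) ∧ ¬(b - a < 2*k+1) ∧ ¬((b + (4*k+2-(b-a))/2) % 2 = 0) ∧ (b + (4*k+2-(b-a))/2 + 2*k+1)/2 < 2*k+1 ∧ c = 4*k+3 + (b + (4*k+2-(b-a))/2 + 2*k+1)/2) ∨
  (¬(b = 4*k+2) ∧ ¬(b - a = 2*k+1) ∧ ¬((b - a) % 2 = 1) ∧ ¬(b - a < 2*k+1) ∧ ¬((b + (4*k+2-(b-a))/2) % 2 = 0) ∧ ¬((b + (4*k+2-(b-a))/2 + 2*k+1)/2 < 2*k+1) ∧ c = 4*k+3 + ((b + (4*k+2-(b-a))/2 + 2*k+1)/2 - (2*k+1)))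

-- leaves: 17

set_option maxHeartbeats 1000000 in
lemma Fval_char (k a b : ℕ) : Qc k a b (Fval k a b) := by
  unfold Qc Fval
  split_ifs
  all_goals first
    | (exact Or.inl ⟨by assumption, by assumption, by assumption, rfl⟩)
    | (exact Or.inr (Or.inl ⟨by assumption, by assumption, by assumption, rfl⟩))
    | (exact Or.inr (Or.inr (Or.inl ⟨by assumption, by assumption, rfl⟩)))
    | (exact Or.inr (Or.inr (Or.inr (Or.inl ⟨by assumption, by assumption, rfl⟩))))
    | (exact Or.inr (Or.inr (Or.inr (Or.inr (Or.inl ⟨by assumption, by assumption, by assumption, by assumption, by assumption, rfl⟩)))))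
    | (exact Or.inr (Or.inr (Or.inr (Or.inr (Or.inr (Or.inl ⟨by assumption, by assumption, by assumption, by assumption, by assumption, by assumption, rfl⟩))))))
    | (exact Or.inr (Or.inr (Or.inr (Or.inr (Or.inr (Or.inr (Or.inl ⟨by assumption, by assumption, by assumption, by assumption, by assumption, rfl⟩)))))))
    | (exact Or.inr (Or.inr (Or.inr (Or.inr (Or.inr (Or.inr (Or.inr (Or.inl ⟨by assumption, by assumption, by assumption, by assumption, by assumption, rfl⟩))))))))
    | (exact Or.inr (Or.inr (Or.inr (Or.inr (Or.inr (Or.inr (Or.inr (Or.inr (Or.inl ⟨by assumption, by assumption, by assumption, by assumption, by assumption, rfl⟩)))))))))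
    | (exact Or.inr (Or.inr (Or.inr (Or.inr (Or.inr (Or.inr (Or.inr (Or.inr (Or.inr (Or.inl ⟨by assumption, by assumption, by assumption, by assumption, by assumption, by assumption, rfl⟩))))))))))
    | (exact Or.inr (Or.inr (Or.inr (Or.inr (Or.inr (Or.inr (Or.inr (Or.inr (Or.inr (Or.inr (Or.inl ⟨by assumption, by assumption, by assumption, by assumption, by assumption, by assumption, rfl⟩)))))))))))
    | (exact Or.inr (Or.inr (Or.inr (Or.inr (Or.inr (Or.inr (Or.inr (Or.inr (Or.inr (Or.inr (Or.inr (Or.inl ⟨by assumption, by assumption, by assumption, by assumption, by assumption, by assumption, rfl⟩))))))))))))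
    | (exact Or.inr (Or.inr (Or.inr (Or.inr (Or.inr (Or.inr (Or.inr (Or.inr (Or.inr (Or.inr (Or.inr (Or.inr (Or.inl ⟨by assumption, by assumption, by assumption, by assumption, by assumption, by assumption, rfl⟩)))))))))))))
    | (exact Or.inr (Or.inr (Or.inr (Or.inr (Or.inr (Or.inr (Or.inr (Or.inr (Or.inr (Or.inr (Or.inr (Or.inr (Or.inr (Or.inl ⟨by assumption, by assumption, by assumption, by assumption, by assumption, by assumption, rfl⟩))))))))))))))
    | (exact Or.inr (Or.inr (Or.inr (Or.inr (Or.inr (Or.inr (Or.inr (Or.inr (Or.inr (Or.inr (Or.inr (Or.inr (Or.inr (Or.inr (Or.inl ⟨by assumption, by assumption, by assumption, by assumption, by assumption, by assumption, rfl⟩)))))))))))))))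
    | (exact Or.inr (Or.inr (Or.inr (Or.inr (Or.inr (Or.inr (Or.inr (Or.inr (Or.inr (Or.inr (Or.inr (Or.inr (Or.inr (Or.inr (Or.inr (Or.inl ⟨by assumption, by assumption, by assumption, by assumption, by assumption, by assumption, rfl⟩))))))))))))))))
    | (exact Or.inr (Or.inr (Or.inr (Or.inr (Or.inr (Or.inr (Or.inr (Or.inr (Or.inr (Or.inr (Or.inr (Or.inr (Or.inr (Or.inr (Or.inr (Or.inr (⟨by assumption, by assumption, by assumption, by assumption, by assumption, by assumption, rfl⟩)))))))))))))))))

def Qp (k a b c : ℕ) : Prop :=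
  (b = 4*k+2 ∧ a % 2 = 1 ∧ c ≤ 4*k+1 ∧ (c = a + 2*k+1 ∨ c + 2*k+1 = a)) ∨
  (b = 4*k+2 ∧ a % 2 = 0 ∧ 2*c = a + 8*k+6) ∨
  (b ≠ 4*k+2 ∧ b - a = 2*k+1 ∧ c = 6*k+4) ∨
  (b ≠ 4*k+2 ∧ (b-a) % 2 = 1 ∧ b - a < 2*k+1 ∧ c < 4*k+2 ∧
    (a+c = 2*b+2*k+1 ∨ a+c+2*k+1 = 2*b ∨ a+c+6*k+3 = 2*b)) ∨
  (b ≠ 4*k+2 ∧ (b-a) % 2 = 1 ∧ 2*k+1 < b - a ∧ c < 4*k+2 ∧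
    (b+c = 2*a+2*k+1 ∨ b+c = 2*a+6*k+3)) ∨
  (b ≠ 4*k+2 ∧ (b-a) % 2 = 0 ∧ a < b ∧ 4*k+3 ≤ c ∧ c ≤ 6*k+3 ∧
    (a+b+16*k+12 = 4*c ∨ a+b+20*k+14 = 4*c ∨ a+b+12*k+10 = 4*c))

set_option maxHeartbeats 1000000 in
lemma Fval_char' (k a b : ℕ) (hab : a < b) (hb : b ≤ 4*k+2) : Qp k a b (Fval k a b) := by
  have h := Fval_char k a b
  generalize hc : Fval k a b = c at h ⊢
  unfold Qc at h
  unfold Qp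
  rcases h with h|h|h|h|h|h|h|h|h|h|h|h|h|h|h|h|h
  · exact Or.inl ⟨by omega, by omega, by omega, Or.inl (by omega)⟩
  · exact Or.inl ⟨by omega, by omega, by omega, Or.inr (by omega)⟩
  · exact Or.inr (Or.inl ⟨by omega, by omega, by omega⟩)
  · exact Or.inr (Or.inr (Or.inl ⟨by omega, by omega, by omega⟩))
  · exact Or.inr (Or.inr (Or.inr (Or.inl ⟨by omega, by omega, by omega, by omega, Or.inl (by omega)⟩)))
  · exact Or.inr (Or.inr (Or.inr (Or.inl ⟨by omega, by omega, by omega, by omega, Or.inr (Or.inl (by omega))⟩)))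
  · exact Or.inr (Or.inr (Or.inr (Or.inl ⟨by omega, by omega, by omega, by omega, Or.inr (Or.inr (by omega))⟩)))
  · exact Or.inr (Or.inr (Or.inr (Or.inr (Or.inl ⟨by omega, by omega, by omega, by omega, Or.inr (by omega)⟩))))
  · exact Or.inr (Or.inr (Or.inr (Or.inr (Or.inl ⟨by omega, by omega, by omega, by omega, Or.inl (by omega)⟩))))
  · exact Or.inr (Or.inr (Or.inr (Or.inr (Or.inr (⟨by omega, by omega, by omega, by omega, by omega, Or.inl (by omega)⟩)))))
  · exact Or.inr (Or.inr (Or.inr (Or.inr (Or.inr (⟨by omega, by omega, by omega, by omega, by omega, Or.inl (by omega)⟩)))))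
  · exact Or.inr (Or.inr (Or.inr (Or.inr (Or.inr (⟨by omega, by omega, by omega, by omega, by omega, Or.inr (Or.inl (by omega))⟩)))))
  · exact Or.inr (Or.inr (Or.inr (Or.inr (Or.inr (⟨by omega, by omega, by omega, by omega, by omega, Or.inr (Or.inr (by omega))⟩)))))
  · exact Or.inr (Or.inr (Or.inr (Or.inr (Or.inr (⟨by omega, by omega, by omega, by omega, by omega, Or.inr (Or.inl (by omega))⟩)))))
  · exact Or.inr (Or.inr (Or.inr (Or.inr (Or.inr (⟨by omega, by omega, by omega, by omega, by omega, Or.inr (Or.inr (by omega))⟩)))))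
  · exact Or.inr (Or.inr (Or.inr (Or.inr (Or.inr (⟨by omega, by omega, by omega, by omega, by omega, Or.inl (by omega)⟩)))))
  · exact Or.inr (Or.inr (Or.inr (Or.inr (Or.inr (⟨by omega, by omega, by omega, by omega, by omega, Or.inl (by omega)⟩)))))

lemma Qp_ne (k a b c : ℕ) (hab : a < b) (hb : b ≤ 4*k+2) (h : Qp k a b c) :
    c ≠ a ∧ c ≠ b := by
  unfold Qp at h
  rcases h with h|h|h|h|h|h <;> omega

set_option maxHeartbeats 1000000 in
lemma Qp_inj (k a b c d x : ℕ) (hab : a < b) (hcd : c < d) (hb : b ≤ 4*k+2) (hd : d ≤ 4*k+2)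
    (hsh : a = c ∨ a = d ∨ b = c ∨ b = d) (hne : ¬(a = c ∧ b = d))
    (h1 : Qp k a b x) (h2 : Qp k c d x) : False := by
  unfold Qp at h1 h2
  rcases h1 with h1|h1|h1|h1|h1|h1 <;> rcases h2 with h2|h2|h2|h2|h2|h2 <;> omega

set_option maxHeartbeats 1000000 in
lemma Qp_anti (k a b c d x w : ℕ) (hab : a < b) (hcd : c < d) (hb : b ≤ 4*k+2) (hd : d ≤ 4*k+2)
    (hx : x = a ∨ x = b) (hw : w = c ∨ w = d) (hxw : x ≠ w)
    (h1 : Qp k a b w) (h2 : Qp k c d x) : False := by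
  unfold Qp at h1 h2
  rcases h1 with h1|h1|h1|h1|h1|h1 <;> rcases h2 with h2|h2|h2|h2|h2|h2 <;> omega

/-- vertex colouring of K_{4k+3}. -/
def cvK (k : ℕ) (v : Fin (4*k+3)) : Fin (6*k+5) := ⟨v.val, by have := v.isLt; omega⟩

/-- edge colouring of K_{4k+3}. -/
def ceK (k : ℕ) : Sym2 (Fin (4*k+3)) → Fin (6*k+5) :=
  Sym2.lift ⟨fun x y => ⟨Fval k (min x.val y.val) (max x.val y.val), by
      apply Fval_lt
      · have := x.isLt; have := y.isLt; omega
      · have := x.isLt; have := y.isLt; omega⟩,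
    fun x y => by simp [min_comm, max_comm]⟩

lemma ceK_mk (k : ℕ) (x y : Fin (4*k+3)) :
    (ceK k s(x,y)).val = Fval k (min x.val y.val) (max x.val y.val) := rfl

lemma ceK_char (k : ℕ) (x y : Fin (4*k+3)) (h : x ≠ y) :
    Qp k (min x.val y.val) (max x.val y.val) (ceK k s(x,y)).val := by
  rw [ceK_mk]
  apply Fval_char'
  · have : x.val ≠ y.val := fun hh => h (Fin.ext hh)
    omega
  · have := x.isLt; have := y.isLt; omega

lemma ceK_ne_val (k : ℕ) (x y : Fin (4*k+3)) (h : x ≠ y) :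
    (ceK k s(x,y)).val ≠ x.val ∧ (ceK k s(x,y)).val ≠ y.val := by
  have hq := ceK_char k x y h
  have hne : x.val ≠ y.val := fun hh => h (Fin.ext hh)
  have h2 := Qp_ne k (min x.val y.val) (max x.val y.val) (ceK k s(x,y)).val
    (by omega) (by have := x.isLt; have := y.isLt; omega) hq
  omega

lemma ceK_inj (k : ℕ) (x y z w : Fin (4*k+3)) (hxy : x ≠ y) (hzw : z ≠ w)
    (hsh : x = z ∨ x = w ∨ y = z ∨ y = w) (hne : s(x,y) ≠ s(z,w)) :
    ceK k s(x,y) ≠ ceK k s(z,w) := by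
  intro h
  have h1 := ceK_char k x y hxy
  have h2 := ceK_char k z w hzw
  rw [h] at h1
  have hxy' : x.val ≠ y.val := fun hh => hxy (Fin.ext hh)
  have hzw' : z.val ≠ w.val := fun hh => hzw (Fin.ext hh)
  have hsh' : min x.val y.val = min z.val w.val ∨ min x.val y.val = max z.val w.val ∨
      max x.val y.val = min z.val w.val ∨ max x.val y.val = max z.val w.val := by
    rcases hsh with h'|h'|h'|h' <;> (have := congrArg Fin.val h'; omega)
  have hnep : ¬((x = z ∧ y = w) ∨ (x = w ∧ y = z)) := by rw [← Sym2.eq_iff]; exact hne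
  have hne' : ¬(min x.val y.val = min z.val w.val ∧ max x.val y.val = max z.val w.val) := by
    rintro ⟨e1, e2⟩
    apply hnep
    have hx := x.isLt; have hy := y.isLt; have hz := z.isLt; have hw := w.isLt
    rcases le_or_gt x.val y.val with hc | hc
    · rcases le_or_gt z.val w.val with hc2 | hc2
      · left; exact ⟨Fin.ext (by omega), Fin.ext (by omega)⟩
      · right; exact ⟨Fin.ext (by omega), Fin.ext (by omega)⟩
    · rcases le_or_gt z.val w.val with hc2 | hc2
      · right; exact ⟨Fin.ext (by omega), Fin.ext (by omega)⟩
      · left; exact ⟨Fin.ext (by omega), Fin.ext (by omega)⟩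
  exact Qp_inj k (min x.val y.val) (max x.val y.val) (min z.val w.val) (max z.val w.val)
    (ceK k s(z,w)).val (by omega) (by omega)
    (by have := x.isLt; have := y.isLt; omega) (by have := z.isLt; have := w.isLt; omega)
    hsh' hne' h1 h2

theorem constructionOK (k : ℕ) :
    IsHarmoniousTotalColoring (⊤ : SimpleGraph (Fin (4*k+3))) (6*k+5) (cvK k) (ceK k) := by
  refine ⟨?_, ?_, ?_, ?_⟩
  · intro u v huv h
    rw [SimpleGraph.top_adj] at huv
    rw [Fin.ext_iff] at h
    simp only [cvK] at h
    exact huv (Fin.ext h)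
  · intro e f
    induction e using Sym2.ind with | _ x y =>
    induction f using Sym2.ind with | _ z w =>
    intro he hf hef hsh
    rw [SimpleGraph.mem_edgeSet, SimpleGraph.top_adj] at he hf
    obtain ⟨v, hv1, hv2⟩ := hsh
    rw [Sym2.mem_iff] at hv1 hv2
    apply ceK_inj k x y z w he hf _ hef
    rcases hv1 with rfl | rfl <;> rcases hv2 with h'|h' <;> tauto
  · intro v e
    induction e using Sym2.ind with | _ x y =>
    intro he hv h
    rw [SimpleGraph.mem_edgeSet, SimpleGraph.top_adj] at he
    rw [Sym2.mem_iff] at hv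
    have := ceK_ne_val k x y he
    have hval := congrArg Fin.val h
    simp only [cvK] at hval
    rcases hv with rfl | rfl <;> omega
  · intro v e w f
    induction e using Sym2.ind with | _ x y =>
    induction f using Sym2.ind with | _ p q =>
    intro he hf hve hwf hpair
    rw [SimpleGraph.mem_edgeSet, SimpleGraph.top_adj] at he hf
    rw [Sym2.mem_iff] at hve hwf
    rw [Sym2.eq_iff] at hpair
    rcases hpair with ⟨h1, h2⟩ | ⟨h1, h2⟩
    · -- cv v = cv w, ce e = ce f
      rw [Fin.ext_iff] at h1
      simp only [cvK] at h1
      have hvw : v = w := Fin.ext h1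
      subst hvw
      refine ⟨rfl, ?_⟩
      by_contra hne
      refine ceK_inj k x y p q he hf ?_ hne h2
      rcases hve with rfl | rfl <;> rcases hwf with h'|h' <;> tauto
    · -- cv v = ce f, ce e = cv w
      exfalso
      rw [Fin.ext_iff] at h1 h2
      simp only [cvK] at h1 h2
      have hv1 : v.val = (ceK k s(p,q)).val := h1
      have hw1 : (ceK k s(x,y)).val = w.val := h2
      by_cases hvw : v = w
      · subst hvw
        have := ceK_ne_val k p q hf
        rcases hwf with rfl | rfl <;> omega
      · have hvw' : v.val ≠ w.val := fun hh => hvw (Fin.ext hh)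
        have q1 := ceK_char k x y he
        have q2 := ceK_char k p q hf
        rw [hw1] at q1
        rw [← hv1] at q2
        refine Qp_anti k (min x.val y.val) (max x.val y.val) (min p.val q.val)
          (max p.val q.val) v.val w.val
          (by have hd : x.val ≠ y.val := fun hh => he (Fin.ext hh); omega)
          (by have hd : p.val ≠ q.val := fun hh => hf (Fin.ext hh); omega)
          (by have := x.isLt; have := y.isLt; omega)
          (by have := p.isLt; have := q.isLt; omega)
          ?_ ?_ hvw' q1 q2
        · rcases hve with rfl | rfl <;> omega
        · rcases hwf with rfl | rfl <;> omega


section LB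
variable {k t : ℕ}

def EF (k : ℕ) : Finset (Sym2 (Fin (4*k+3))) :=
  (⊤ : SimpleGraph (Fin (4*k+3))).edgeFinset

lemma EF_card (k : ℕ) : (EF k).card = (4*k+3)*(2*k+1) := by
  have h1 : (EF k).card = (Fintype.card (Fin (4*k+3))).choose 2 :=
    SimpleGraph.card_edgeFinset_top_eq_card_choose_two
  rw [h1, Fintype.card_fin, Nat.choose_two_right]
  have h2 : (4*k+3) - 1 = 4*k+2 := by omega
  rw [h2]
  have h3 : (4*k+3) * (4*k+2) = ((4*k+3)*(2*k+1))*2 := by ring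
  rw [h3, Nat.mul_div_cancel _ (by norm_num : (0:ℕ) < 2)]

lemma EF_mem {k : ℕ} {e : Sym2 (Fin (4*k+3))} (he : e ∈ EF k) :
    e ∈ (⊤ : SimpleGraph (Fin (4*k+3))).edgeSet := by
  rwa [EF, SimpleGraph.mem_edgeFinset] at he

def mfib (k t : ℕ) (ce : Sym2 (Fin (4*k+3)) → Fin t) (c : Fin t) : ℕ :=
  ((EF k).filter (fun e => ce e = c)).card

lemma mfib_sum (k t : ℕ) (ce : Sym2 (Fin (4*k+3)) → Fin t) :
    ∑ c : Fin t, mfib k t ce c = (4*k+3)*(2*k+1) := by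
  rw [← EF_card k]
  exact (Finset.card_eq_sum_card_fiberwise (fun e _ => Finset.mem_univ (ce e))).symm

def Inc (k t : ℕ) (ce : Sym2 (Fin (4*k+3)) → Fin t) (c : Fin t) :
    Finset (Fin (4*k+3) × Sym2 (Fin (4*k+3))) :=
  (Finset.univ ×ˢ EF k).filter (fun p => p.1 ∈ p.2 ∧ ce p.2 = c)

lemma Inc_card (k t : ℕ) (ce : Sym2 (Fin (4*k+3)) → Fin t) (c : Fin t) :
    (Inc k t ce c).card = 2 * mfib k t ce c := by
  classical
  have hmap : ∀ p ∈ Inc k t ce c, p.2 ∈ (EF k).filter (fun e => ce e = c) := by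
    intro p hp
    rw [Inc, Finset.mem_filter, Finset.mem_product] at hp
    exact Finset.mem_filter.2 ⟨hp.1.2, hp.2.2⟩
  rw [Finset.card_eq_sum_card_fiberwise hmap]
  have key : ∀ e ∈ (EF k).filter (fun e => ce e = c),
      ((Inc k t ce c).filter (fun p => p.2 = e)).card = 2 := by
    intro e
    induction e using Sym2.ind with | _ x y =>
    intro he
    rw [Finset.mem_filter] at he
    obtain ⟨heE, hec⟩ := he
    have hxy : x ≠ y := by
      have := EF_mem heE
      rwa [SimpleGraph.mem_edgeSet, SimpleGraph.top_adj] at this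
    have hset : (Inc k t ce c).filter (fun p => p.2 = s(x,y)) =
        {(x, s(x,y)), (y, s(x,y))} := by
      ext ⟨v, f⟩
      simp only [Inc, Finset.mem_filter, Finset.mem_product, Finset.mem_univ, true_and,
        Finset.mem_insert, Finset.mem_singleton, Prod.mk.injEq]
      constructor
      · rintro ⟨⟨hfE, hv, hcf⟩, rfl⟩
        rcases Sym2.mem_iff.1 hv with rfl | rfl
        · exact Or.inl ⟨rfl, rfl⟩
        · exact Or.inr ⟨rfl, rfl⟩
      · rintro (⟨rfl, rfl⟩ | ⟨rfl, rfl⟩)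
        · exact ⟨⟨heE, Sym2.mem_mk_left _ _, hec⟩, rfl⟩
        · exact ⟨⟨heE, Sym2.mem_mk_right _ _, hec⟩, rfl⟩
    rw [hset, Finset.card_insert_of_notMem (by simp [hxy]), Finset.card_singleton]
  rw [Finset.sum_congr rfl key, Finset.sum_const, smul_eq_mul, mul_comm]
  rfl


variable {k t : ℕ} {cv : Fin (4*k+3) → Fin t} {ce : Sym2 (Fin (4*k+3)) → Fin t}

def HTC (cv : Fin (4*k+3) → Fin t) (ce : Sym2 (Fin (4*k+3)) → Fin t) : Prop :=
  (∀ u v, (⊤ : SimpleGraph (Fin (4*k+3))).Adj u v → cv u ≠ cv v) ∧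
  (∀ e f, e ∈ (⊤ : SimpleGraph (Fin (4*k+3))).edgeSet → f ∈ (⊤ : SimpleGraph (Fin (4*k+3))).edgeSet
    → e ≠ f → (∃ v, v ∈ e ∧ v ∈ f) → ce e ≠ ce f) ∧
  (∀ v e, e ∈ (⊤ : SimpleGraph (Fin (4*k+3))).edgeSet → v ∈ e → cv v ≠ ce e) ∧
  (∀ v e w f, e ∈ (⊤ : SimpleGraph (Fin (4*k+3))).edgeSet →
    f ∈ (⊤ : SimpleGraph (Fin (4*k+3))).edgeSet → v ∈ e → w ∈ f →
    s(cv v, ce e) = s(cv w, ce f) → v = w ∧ e = f)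

lemma cv_inj (H : HTC cv ce) : Function.Injective cv := by
  intro u v huv
  by_contra hne
  exact H.1 u v (by simpa using hne) huv

lemma t_ge (H : HTC cv ce) : 4*k+3 ≤ t := by
  have := Fintype.card_le_of_injective cv (cv_inj H)
  simpa using this

lemma partner_injOn (H : HTC cv ce) (c : Fin t) :
    Set.InjOn (fun p : Fin (4*k+3) × Sym2 (Fin (4*k+3)) => cv p.1) (Inc k t ce c) := by
  intro p hp q hq hpq
  have hp' := Finset.mem_filter.1 (Finset.mem_coe.1 hp)
  have hq' := Finset.mem_filter.1 (Finset.mem_coe.1 hq)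
  have hpE : p.2 ∈ EF k := (Finset.mem_product.1 hp'.1).2
  have hqE : q.2 ∈ EF k := (Finset.mem_product.1 hq'.1).2
  obtain ⟨hpmem, hpc⟩ := hp'.2
  obtain ⟨hqmem, hqc⟩ := hq'.2
  have hpq' : cv p.1 = cv q.1 := hpq
  have h4 := H.2.2.2 p.1 p.2 q.1 q.2 (EF_mem hpE) (EF_mem hqE) hpmem hqmem
    (by rw [hpq', hpc, hqc])
  exact Prod.ext h4.1 h4.2

lemma mfib_le (H : HTC cv ce) (c : Fin t) : 2 * mfib k t ce c ≤ 4*k+3 := by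
  have hle : (Inc k t ce c).card ≤ (Finset.univ.image cv).card := by
    apply Finset.card_le_card_of_injOn (fun p => cv p.1)
    · intro p _
      exact Finset.mem_image_of_mem _ (Finset.mem_univ _)
    · exact partner_injOn H c
  rw [Inc_card] at hle
  have himg : (Finset.univ.image cv).card = 4*k+3 := by
    rw [Finset.card_image_of_injective _ (cv_inj H), Finset.card_univ, Fintype.card_fin]
  omega

lemma mfib_le_vertex (H : HTC cv ce) (v : Fin (4*k+3)) :
    4*k+3 + 2 * mfib k t ce (cv v) ≤ t := by
  classical
  have edgemem : ∀ u : Fin (4*k+3), u ≠ v → s(v,u) ∈ (⊤ : SimpleGraph (Fin (4*k+3))).edgeSet := by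
    intro u hu
    rw [SimpleGraph.mem_edgeSet, SimpleGraph.top_adj]
    exact fun hh => hu hh.symm
  have hinjP : Set.InjOn (fun u => ce s(v,u)) ((Finset.univ.erase v) : Finset (Fin (4*k+3))) := by
    intro u hu u' hu' huu
    have hu1 : u ≠ v := Finset.ne_of_mem_erase (Finset.mem_coe.1 hu)
    have hu2 : u' ≠ v := Finset.ne_of_mem_erase (Finset.mem_coe.1 hu')
    have huu' : ce s(v,u) = ce s(v,u') := huu
    have h4 := H.2.2.2 v s(v,u) v s(v,u') (edgemem u hu1) (edgemem u' hu2)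
      (Sym2.mem_mk_left _ _) (Sym2.mem_mk_left _ _) (by rw [huu'])
    exact Sym2.congr_right.1 h4.2
  have hPcard : ((Finset.univ.erase v).image (fun u => ce s(v,u))).card = 4*k+2 := by
    rw [Finset.card_image_of_injOn hinjP, Finset.card_erase_of_mem (Finset.mem_univ v),
      Finset.card_univ, Fintype.card_fin]
    omega
  have hQcard : ((Inc k t ce (cv v)).image (fun p => cv p.1)).card = 2 * mfib k t ce (cv v) := by
    rw [Finset.card_image_of_injOn (partner_injOn H (cv v)), Inc_card]
  have hdisj : Disjoint ((Finset.univ.erase v).image (fun u => ce s(v,u)))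
      ((Inc k t ce (cv v)).image (fun p => cv p.1)) := by
    rw [Finset.disjoint_left]
    intro x hxP hxQ
    obtain ⟨u, hu, hux⟩ := Finset.mem_image.1 hxP
    obtain ⟨p, hp, hpx⟩ := Finset.mem_image.1 hxQ
    have hu1 : u ≠ v := Finset.ne_of_mem_erase hu
    have hp' := Finset.mem_filter.1 hp
    have hpE : p.2 ∈ EF k := (Finset.mem_product.1 hp'.1).2
    obtain ⟨hpmem, hpc⟩ := hp'.2
    have hpair : s(cv v, ce s(v,u)) = s(cv p.1, ce p.2) := by
      rw [hux, ← hpx, hpc]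
      exact Sym2.eq_swap
    have h4 := H.2.2.2 v s(v,u) p.1 p.2 (edgemem u hu1) (EF_mem hpE)
      (Sym2.mem_mk_left _ _) hpmem hpair
    exact H.2.2.1 v p.2 (EF_mem hpE) (h4.2 ▸ Sym2.mem_mk_left v u) hpc.symm
  have hcP : cv v ∉ (Finset.univ.erase v).image (fun u => ce s(v,u)) := by
    intro hcP
    obtain ⟨u, hu, hux⟩ := Finset.mem_image.1 hcP
    have hu1 : u ≠ v := Finset.ne_of_mem_erase hu
    exact H.2.2.1 v s(v,u) (edgemem u hu1) (Sym2.mem_mk_left _ _) hux.symm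
  have hcQ : cv v ∉ (Inc k t ce (cv v)).image (fun p => cv p.1) := by
    intro hcQ
    obtain ⟨p, hp, hpx⟩ := Finset.mem_image.1 hcQ
    have hp' := Finset.mem_filter.1 hp
    have hpE : p.2 ∈ EF k := (Finset.mem_product.1 hp'.1).2
    obtain ⟨hpmem, hpc⟩ := hp'.2
    have hp1 : p.1 = v := cv_inj H hpx
    exact H.2.2.1 v p.2 (EF_mem hpE) (hp1 ▸ hpmem) hpc.symm
  have hcard := Finset.card_le_card (Finset.subset_univ
    (insert (cv v) (((Finset.univ.erase v).image (fun u => ce s(v,u))) ∪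
      ((Inc k t ce (cv v)).image (fun p => cv p.1)))))
  rw [Finset.card_insert_of_notMem (by simp only [Finset.mem_union]; tauto),
    Finset.card_union_of_disjoint hdisj, hPcard, hQcard,
    Finset.card_univ, Fintype.card_fin] at hcard
  omega


theorem lb_main (H : HTC cv ce) : 6*k+5 ≤ t := by
  classical
  have htn := t_ge H
  set S : Finset (Fin t) := Finset.univ.image cv with hS
  have hScard : S.card = 4*k+3 := by
    rw [hS, Finset.card_image_of_injective _ (cv_inj H), Finset.card_univ, Fintype.card_fin]
  have hsplit : ∑ c ∈ Finset.univ \ S, mfib k t ce c + ∑ c ∈ S, mfib k t ce c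
      = (4*k+3)*(2*k+1) := by
    rw [← mfib_sum k t ce]
    exact Finset.sum_sdiff (Finset.subset_univ S)
  have hA : 2 * ∑ c ∈ S, mfib k t ce c ≤ (4*k+3) * (t - (4*k+3)) := by
    rw [Finset.mul_sum]
    calc ∑ c ∈ S, 2 * mfib k t ce c ≤ ∑ _c ∈ S, (t - (4*k+3)) := by
          apply Finset.sum_le_sum
          intro c hcS
          obtain ⟨v, _, rfl⟩ := Finset.mem_image.1 hcS
          have := mfib_le_vertex H v
          omega
      _ = (4*k+3) * (t - (4*k+3)) := by rw [Finset.sum_const, hScard, smul_eq_mul]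
  have hB : ∑ c ∈ Finset.univ \ S, mfib k t ce c ≤ (t - (4*k+3)) * (2*k+1) := by
    calc ∑ c ∈ Finset.univ \ S, mfib k t ce c ≤ ∑ _c ∈ Finset.univ \ S, (2*k+1) := by
          apply Finset.sum_le_sum
          intro c _
          have := mfib_le H c
          omega
      _ = (t - (4*k+3)) * (2*k+1) := by
          rw [Finset.sum_const, Finset.card_sdiff_of_subset (Finset.subset_univ S), Finset.card_univ,
            Fintype.card_fin, hScard, smul_eq_mul]
  by_contra hcon
  push_neg at hcon
  have hs : t - (4*k+3) ≤ 2*k+1 := by omega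
  have c1 : (4*k+3) * (t - (4*k+3)) ≤ (4*k+3) * (2*k+1) := Nat.mul_le_mul_left _ hs
  have c2 : (t - (4*k+3)) * (2*k+1) ≤ (2*k+1) * (2*k+1) := Nat.mul_le_mul_right _ hs
  obtain ⟨K, hK⟩ : ∃ K, k*k = K := ⟨_, rfl⟩
  have d1 : 2 * ∑ c ∈ S, mfib k t ce c ≤ 8*K+10*k+3 :=
    hA.trans (c1.trans_eq (by rw [← hK]; ring))
  have d2 : ∑ c ∈ Finset.univ \ S, mfib k t ce c ≤ 4*K+4*k+1 :=
    hB.trans (c2.trans_eq (by rw [← hK]; ring))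
  have d3 : ∑ c ∈ Finset.univ \ S, mfib k t ce c + ∑ c ∈ S, mfib k t ce c = 8*K+10*k+3 :=
    hsplit.trans (by rw [← hK]; ring)
  omega

end LB


/-- For every `k ≥ 1`, `h_t(K_{4k+3}) = 6k + 5`; in particular `K_{4k+3}` admits a
harmonious total colouring with `6k + 5` colours. -/
theorem ht_K_4k3 (k : ℕ) (hk : 1 ≤ k) :
    harmoniousTotalChromaticNumber (⊤ : SimpleGraph (Fin (4 * k + 3))) = 6 * k + 5 ∧
    ∃ cv ce, IsHarmoniousTotalColoring (⊤ : SimpleGraph (Fin (4 * k + 3))) (6 * k + 5) cv ce := by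
  have hmem : (6*k+5) ∈ {t | ∃ cv ce,
      IsHarmoniousTotalColoring (⊤ : SimpleGraph (Fin (4 * k + 3))) t cv ce} :=
    ⟨cvK k, ceK k, constructionOK k⟩
  constructor
  · apply le_antisymm
    · exact Nat.sInf_le hmem
    · apply le_csInf ⟨_, hmem⟩
      rintro t ⟨cv, ce, hcol⟩
      exact lb_main (show HTC cv ce from hcol)
  · exact ⟨cvK k, ceK k, constructionOK k⟩
end

section
/- For every integer λ ≥ 1, the harmonious total chromatic number of the complete multigraph λK_4 equals 3λ + 4. -/
/-- A harmonious total colouring of the complete multigraph `λK_n` with `k` colours.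
Vertices are `Fin n`; the `lam` parallel edges joining a pair `e` of distinct vertices
are `(e, i)` for `i : Fin lam`.  The colouring is proper on vertices (all vertices are
pairwise adjacent), on edges sharing an endpoint (in particular parallel edges), and on
vertex-edge incidences; moreover the unordered pairs `{cv v, ce e i}` over incident
vertex-edge pairs are pairwise distinct. -/
def IsHarmoniousTotalColoringM (n lam k : ℕ)
    (cv : Fin n → Fin k) (ce : Sym2 (Fin n) → Fin lam → Fin k) : Prop :=
  (∀ u v : Fin n, u ≠ v → cv u ≠ cv v) ∧
  (∀ (e f : Sym2 (Fin n)) (i j : Fin lam), ¬ e.IsDiag → ¬ f.IsDiag → (e, i) ≠ (f, j) →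
    (∃ v, v ∈ e ∧ v ∈ f) → ce e i ≠ ce f j) ∧
  (∀ (v : Fin n) (e : Sym2 (Fin n)) (i : Fin lam), ¬ e.IsDiag → v ∈ e → cv v ≠ ce e i) ∧
  (∀ (v : Fin n) (e : Sym2 (Fin n)) (i : Fin lam) (w : Fin n) (f : Sym2 (Fin n)) (j : Fin lam),
    ¬ e.IsDiag → ¬ f.IsDiag → v ∈ e → w ∈ f →
    s(cv v, ce e i) = s(cv w, ce f j) → v = w ∧ e = f ∧ i = j)

/-- The harmonious total chromatic number of the complete multigraph `λK_n`. -/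
noncomputable def harmoniousTotalChromaticNumberM (n lam : ℕ) : ℕ :=
  sInf {k | ∃ cv ce, IsHarmoniousTotalColoringM n lam k cv ce}

/-!
Two distinct edges of `K₄` are disjoint exactly when their endpoints have the same XOR, so the
three perfect matchings of `K₄` are indexed by `t ∈ {1, 2, 3}`.

Upper bound: colour vertex `v` with `v` and the `i`-th copy of the edge `ab` with
`3 + (a xor b) + 3i`.

Lower bound: edges sharing an endpoint get distinct colours, so a colour that is not a vertex
colour lives on a single perfect matching. With at most `3λ + 3` colours there are at most
`3λ - 1` such colours, hence some matching `{p, r}` carries fewer than `λ` of them. The `λ`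
copies of `p` have distinct colours, so one of them has a vertex colour `c(w)`, with `w ∈ r`;
likewise a copy of `r` has colour `c(w')` with `w' ∈ p`. The incidences of `w'` with that copy
of `p` and of `w` with that copy of `r` both give the colour pair `{c(w), c(w')}`.
-/

namespace IsHarmoniousTotalColoringM

variable {n lam k : ℕ} {cv : Fin n → Fin k} {ce : Sym2 (Fin n) → Fin lam → Fin k}

theorem injective_cv (hc : IsHarmoniousTotalColoringM n lam k cv ce) : Function.Injective cv :=
  fun u v h => Classical.byContradiction fun huv => hc.1 u v huv h

theorem eq_of_ce_eq (hc : IsHarmoniousTotalColoringM n lam k cv ce) {e f : Sym2 (Fin n)}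
    {i j : Fin lam} {v : Fin n} (he : ¬ e.IsDiag) (hf : ¬ f.IsDiag) (hve : v ∈ e) (hvf : v ∈ f)
    (h : ce e i = ce f j) : e = f ∧ i = j := by
  by_contra hne
  exact hc.2.1 e f i j he hf (by simpa [Prod.ext_iff] using hne) ⟨v, hve, hvf⟩ h

theorem injective_ce (hc : IsHarmoniousTotalColoringM n lam k cv ce) {e : Sym2 (Fin n)}
    (he : ¬ e.IsDiag) : Function.Injective (ce e) :=
  fun _ _ h => (hc.eq_of_ce_eq he he (Sym2.out_fst_mem e) (Sym2.out_fst_mem e) h).2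

theorem notMem_of_ce_eq_cv (hc : IsHarmoniousTotalColoringM n lam k cv ce) {e : Sym2 (Fin n)}
    {i : Fin lam} {w : Fin n} (he : ¬ e.IsDiag) (h : ce e i = cv w) : w ∉ e :=
  fun hw => hc.2.2.1 w e i he hw h.symm

theorem eq_of_crossed_vertex_colors (hc : IsHarmoniousTotalColoringM n lam k cv ce)
    {p r : Sym2 (Fin n)} {i j : Fin lam} {w w' : Fin n} (hp : ¬ p.IsDiag) (hr : ¬ r.IsDiag)
    (hw : w ∈ r) (hw' : w' ∈ p) (hpw : ce p i = cv w) (hrw : ce r j = cv w') : p = r :=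
  (hc.2.2.2 w' p i w r j hp hr hw' hw (by rw [hpw, hrw, Sym2.eq_swap])).2.1

end IsHarmoniousTotalColoringM

def matchingIndex (e : Sym2 (Fin 4)) : Fin 4 :=
  Sym2.lift ⟨fun a b => a ^^^ b, by decide⟩ e

theorem matchingIndex_eq_zero_iff : ∀ e : Sym2 (Fin 4), matchingIndex e = 0 ↔ e.IsDiag := by
  decide

theorem mem_iff_notMem_of_matchingIndex_eq : ∀ e f : Sym2 (Fin 4), matchingIndex e ≠ 0 →
    e ≠ f → matchingIndex e = matchingIndex f → ∀ v, v ∈ f ↔ v ∉ e := by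
  decide

theorem exists_mem_mem_of_matchingIndex_ne : ∀ e f : Sym2 (Fin 4), matchingIndex e ≠ 0 →
    matchingIndex f ≠ 0 → matchingIndex e ≠ matchingIndex f → ∃ v, v ∈ e ∧ v ∈ f := by
  decide

theorem exists_ne_matchingIndex_eq : ∀ t : Fin 4, t ≠ 0 →
    ∃ e f, e ≠ f ∧ matchingIndex e = t ∧ matchingIndex f = t := by
  decide

theorem eq_of_matchingIndex_eq_of_mem {e f : Sym2 (Fin 4)} {v : Fin 4} (he : matchingIndex e ≠ 0)
    (h : matchingIndex e = matchingIndex f) (hve : v ∈ e) (hvf : v ∈ f) : e = f :=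
  Classical.byContradiction fun hef =>
    (mem_iff_notMem_of_matchingIndex_eq e f he hef h v).1 hvf hve

section LowerBound

variable {lam k : ℕ} {cv : Fin 4 → Fin k} {ce : Sym2 (Fin 4) → Fin lam → Fin k}

def matchingColors (cv : Fin 4 → Fin k) (ce : Sym2 (Fin 4) → Fin lam → Fin k) (t : Fin 4) :
    Finset (Fin k) :=
  Finset.univ.filter fun c => (∀ v, cv v ≠ c) ∧ ∃ e i, matchingIndex e = t ∧ ce e i = c

theorem disjoint_matchingColors (hc : IsHarmoniousTotalColoringM 4 lam k cv ce) {t t' : Fin 4}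
    (ht : t ≠ 0) (ht' : t' ≠ 0) (htt' : t ≠ t') :
    Disjoint (matchingColors cv ce t) (matchingColors cv ce t') := by
  rw [Finset.disjoint_left]
  rintro c hc₁ hc₂
  obtain ⟨-, e, i, rfl, rfl⟩ := (Finset.mem_filter.1 hc₁).2
  obtain ⟨-, f, j, rfl, hfj⟩ := (Finset.mem_filter.1 hc₂).2
  obtain ⟨v, hve, hvf⟩ := exists_mem_mem_of_matchingIndex_ne e f ht ht' htt'
  have hef := (hc.eq_of_ce_eq (mt (matchingIndex_eq_zero_iff e).2 ht)
    (mt (matchingIndex_eq_zero_iff f).2 ht') hve hvf hfj.symm).1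
  exact htt' (congrArg matchingIndex hef)

theorem sum_card_matchingColors_add_four_le (hc : IsHarmoniousTotalColoringM 4 lam k cv ce) :
    ∑ t ∈ Finset.univ.erase 0, (matchingColors cv ce t).card + 4 ≤ k := by
  have hdisj : (↑(Finset.univ.erase (0 : Fin 4)) : Set (Fin 4)).PairwiseDisjoint
      (matchingColors cv ce) := fun t ht t' ht' htt' =>
    disjoint_matchingColors hc (Finset.ne_of_mem_erase ht) (Finset.ne_of_mem_erase ht') htt'
  have hvert : Disjoint ((Finset.univ.erase 0).biUnion (matchingColors cv ce))
      (Finset.univ.image cv) := by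
    simp only [Finset.disjoint_left, Finset.mem_biUnion, Finset.mem_image]
    rintro c ⟨t, -, hct⟩ ⟨v, -, rfl⟩
    exact (Finset.mem_filter.1 hct).2.1 v rfl
  calc ∑ t ∈ Finset.univ.erase 0, (matchingColors cv ce t).card + 4
      = ((Finset.univ.erase 0).biUnion (matchingColors cv ce) ∪ Finset.univ.image cv).card := by
        rw [Finset.card_union_of_disjoint hvert, Finset.card_biUnion hdisj,
          Finset.card_image_of_injective _ hc.injective_cv, Finset.card_univ, Fintype.card_fin]
    _ ≤ k := (Finset.card_le_univ _).trans_eq (Fintype.card_fin k)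

theorem exists_ce_eq_cv_of_card_matchingColors_lt (hc : IsHarmoniousTotalColoringM 4 lam k cv ce)
    {e : Sym2 (Fin 4)} (he : matchingIndex e ≠ 0)
    (hlt : (matchingColors cv ce (matchingIndex e)).card < lam) : ∃ i w, ce e i = cv w := by
  by_contra! h
  have hsub : Finset.univ.image (ce e) ⊆ matchingColors cv ce (matchingIndex e) := by
    rintro _ hc'
    obtain ⟨i, -, rfl⟩ := Finset.mem_image.1 hc'
    exact Finset.mem_filter.2 ⟨Finset.mem_univ _, fun w hw => h i w hw.symm, e, i, rfl, rfl⟩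
  have := Finset.card_le_card hsub
  rw [Finset.card_image_of_injective _ (hc.injective_ce (mt (matchingIndex_eq_zero_iff e).2 he)),
    Finset.card_univ, Fintype.card_fin] at this
  omega

theorem IsHarmoniousTotalColoringM.three_mul_add_four_le
    (hc : IsHarmoniousTotalColoringM 4 lam k cv ce) : 3 * lam + 4 ≤ k := by
  by_contra! hk
  obtain ⟨t, ht, hlt⟩ : ∃ t ∈ Finset.univ.erase 0, (matchingColors cv ce t).card < lam := by
    apply Finset.exists_lt_of_sum_lt
    have := sum_card_matchingColors_add_four_le hc
    simp only [Finset.sum_const, Finset.mem_univ, Finset.card_erase_of_mem, Finset.card_univ,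
      Fintype.card_fin, smul_eq_mul]
    omega
  have ht0 := Finset.ne_of_mem_erase ht
  obtain ⟨p, r, hpr, rfl, hr⟩ := exists_ne_matchingIndex_eq t ht0
  have hp' : ¬ p.IsDiag := mt (matchingIndex_eq_zero_iff p).2 ht0
  have hr' : ¬ r.IsDiag := mt (matchingIndex_eq_zero_iff r).2 (hr ▸ ht0)
  obtain ⟨i, w, hpw⟩ := exists_ce_eq_cv_of_card_matchingColors_lt hc ht0 hlt
  obtain ⟨j, w', hrw⟩ := exists_ce_eq_cv_of_card_matchingColors_lt hc (hr ▸ ht0) (hr ▸ hlt)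
  have hw : w ∈ r :=
    (mem_iff_notMem_of_matchingIndex_eq p r ht0 hpr hr.symm w).2 (hc.notMem_of_ce_eq_cv hp' hpw)
  have hw' : w' ∈ p := (mem_iff_notMem_of_matchingIndex_eq r p (hr ▸ ht0) hpr.symm hr w').2
    (hc.notMem_of_ce_eq_cv hr' hrw)
  exact hpr (hc.eq_of_crossed_vertex_colors hp' hr' hw hw' hpw hrw)

end LowerBound

section UpperBound

def vertexColoringK4 (lam : ℕ) (v : Fin 4) : Fin (3 * lam + 4) :=
  Fin.castLE (by omega) v

def edgeColoringK4 (lam : ℕ) (e : Sym2 (Fin 4)) (i : Fin lam) : Fin (3 * lam + 4) :=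
  ⟨3 + matchingIndex e + 3 * i, by omega⟩

theorem edgeColoringK4_eq_iff {lam : ℕ} {e f : Sym2 (Fin 4)} {i j : Fin lam}
    (he : matchingIndex e ≠ 0) (hf : matchingIndex f ≠ 0) :
    edgeColoringK4 lam e i = edgeColoringK4 lam f j ↔ matchingIndex e = matchingIndex f ∧ i = j := by
  have := Fin.pos_iff_ne_zero.2 he
  have := Fin.pos_iff_ne_zero.2 hf
  simp only [edgeColoringK4, Fin.ext_iff, Fin.lt_def] at *
  omega

theorem vertexColoringK4_ne_edgeColoringK4 {lam : ℕ} {e : Sym2 (Fin 4)} (he : matchingIndex e ≠ 0)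
    (v : Fin 4) (i : Fin lam) : vertexColoringK4 lam v ≠ edgeColoringK4 lam e i := by
  have := Fin.pos_iff_ne_zero.2 he
  rw [Fin.lt_def] at this
  simp only [Ne, Fin.ext_iff, vertexColoringK4, edgeColoringK4, Fin.val_castLE]
  omega

theorem isHarmoniousTotalColoringM_K4 (lam : ℕ) :
    IsHarmoniousTotalColoringM 4 lam (3 * lam + 4) (vertexColoringK4 lam) (edgeColoringK4 lam) := by
  have index_ne {e : Sym2 (Fin 4)} (he : ¬ e.IsDiag) : matchingIndex e ≠ 0 :=
    mt (matchingIndex_eq_zero_iff e).1 he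
  refine ⟨fun u v huv h => huv (Fin.castLE_injective _ h), ?_, ?_, ?_⟩
  · intro e f i j he hf hne ⟨v, hve, hvf⟩ h
    obtain ⟨hef, rfl⟩ := (edgeColoringK4_eq_iff (index_ne he) (index_ne hf)).1 h
    exact hne (by rw [eq_of_matchingIndex_eq_of_mem (index_ne he) hef hve hvf])
  · intro v e i he _
    exact vertexColoringK4_ne_edgeColoringK4 (index_ne he) v i
  · intro v e i w f j he hf hve hwf h
    rcases Sym2.eq_iff.1 h with ⟨hvw, hij⟩ | ⟨hv, -⟩
    · obtain rfl := Fin.castLE_injective _ hvw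
      obtain ⟨hef, rfl⟩ := (edgeColoringK4_eq_iff (index_ne he) (index_ne hf)).1 hij
      exact ⟨rfl, eq_of_matchingIndex_eq_of_mem (index_ne he) hef hve hwf, rfl⟩
    · exact absurd hv (vertexColoringK4_ne_edgeColoringK4 (index_ne hf) v j)

end UpperBound

theorem ht_multigraph_K4_general (lam : ℕ) :
    harmoniousTotalChromaticNumberM 4 lam = 3 * lam + 4 := by
  have hmem : 3 * lam + 4 ∈ {k | ∃ cv ce, IsHarmoniousTotalColoringM 4 lam k cv ce} :=
    ⟨_, _, isHarmoniousTotalColoringM_K4 lam⟩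
  exact le_antisymm (Nat.sInf_le hmem)
    (le_csInf ⟨_, hmem⟩ fun _ ⟨_, _, hc⟩ => hc.three_mul_add_four_le)

/-- For every `λ ≥ 1`, `h_t(λK_4) = 3λ + 4`. -/
theorem ht_multigraph_K4 (lam : ℕ) (hlam : 1 ≤ lam) :
    harmoniousTotalChromaticNumberM 4 lam = 3 * lam + 4 :=
  ht_multigraph_K4_general lam
end

section
/- Let λ ≥ 1, n ≥ 2, and let c be a harmonious total colouring of the complete multigraph λK_n. Then the number of edges of λK_n whose colour under c is also the colour of some vertex is at most ⌊n(n−1)/4⌋. -/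
open Finset

/-!
Let `c` be the colouring. Each edge `(e, i)` whose colour is the colour `c w` of a vertex has
two ends `v ∈ e`, and each end gives the pair of colours `{c v, c w}`. Properness at `v` forces
`v ≠ w`, so this is the colour pair of an edge of the simple graph `K_n`, and harmoniousness
makes `(v, (e, i)) ↦ {c v, c (e, i)}` injective. Hence twice the number of such edges is at
most `n(n-1)/2`.
-/

variable {V ι K : Type*} (cv : V → K) (ce : Sym2 V → ι → K)

lemma card_sigma_toFinset_of_not_isDiag [DecidableEq V] (S : Finset (Sym2 V × ι))
    (hS : ∀ p ∈ S, ¬ p.1.IsDiag) :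
    #(S.sigma fun p => p.1.toFinset) = 2 * #S := by
  rw [card_sigma, sum_congr rfl fun p hp => Sym2.card_toFinset_of_not_isDiag _ (hS p hp),
    sum_const, smul_eq_mul, mul_comm]

lemma card_image_map_not_isDiag_le [Fintype V] [DecidableEq V] [DecidableEq K] :
    #((univ.filter fun z : Sym2 V => ¬ z.IsDiag).image (Sym2.map cv)) ≤
      (Fintype.card V).choose 2 := by
  rw [← Sym2.card_subtype_not_diag, Fintype.card_subtype]
  exact card_image_le

theorem two_mul_card_vertex_coloured_le_choose_two [Fintype V] [DecidableEq V] [DecidableEq K]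
    (S : Finset (Sym2 V × ι)) (hS : ∀ p ∈ S, ¬ p.1.IsDiag ∧ ∃ w, ce p.1 p.2 = cv w)
    (hinc : ∀ v e i, ¬ e.IsDiag → v ∈ e → cv v ≠ ce e i)
    (hharm : ∀ v e i w f j, ¬ e.IsDiag → ¬ f.IsDiag → v ∈ e → w ∈ f →
      s(cv v, ce e i) = s(cv w, ce f j) → v = w ∧ e = f ∧ i = j) :
    2 * #S ≤ (Fintype.card V).choose 2 := by
  rw [← card_sigma_toFinset_of_not_isDiag S fun p hp => (hS p hp).1]
  refine (card_le_card_of_injOn (fun x => s(cv x.2, ce x.1.1 x.1.2)) ?_ ?_).trans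
    (card_image_map_not_isDiag_le cv)
  · rintro ⟨⟨e, i⟩, v⟩ hx
    simp only [coe_sigma, Set.mem_sigma_iff, mem_coe, Sym2.mem_toFinset] at hx
    obtain ⟨hp, hv⟩ := hx
    obtain ⟨he, w, hw⟩ := hS _ hp
    have hvw : v ≠ w := fun h => hinc v e i he hv (h ▸ hw.symm)
    simp only [coe_image, coe_filter, mem_univ, true_and, Set.mem_image, Set.mem_ofPred_eq]
    exact ⟨s(v, w), by simpa using hvw, by simp [hw]⟩
  · rintro ⟨⟨e, i⟩, v⟩ hx ⟨⟨f, j⟩, w⟩ hy hxy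
    simp only [coe_sigma, Set.mem_sigma_iff, mem_coe, Sym2.mem_toFinset] at hx hy
    obtain ⟨rfl, rfl, rfl⟩ := hharm v e i w f j (hS _ hx.1).1 (hS _ hy.1).1 hx.2 hy.2 hxy
    rfl

theorem multigraph_vertex_coloured_edges_general (n lam k : ℕ)
    (cv : Fin n → Fin k) (ce : Sym2 (Fin n) → Fin lam → Fin k)
    (hc : IsHarmoniousTotalColoringM n lam k cv ce) :
    {p : Sym2 (Fin n) × Fin lam | ¬ p.1.IsDiag ∧ ∃ v, ce p.1 p.2 = cv v}.ncard ≤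
      n * (n - 1) / 4 := by
  classical
  obtain ⟨-, -, hinc, hharm⟩ := hc
  have h := two_mul_card_vertex_coloured_le_choose_two cv ce
    {p : Sym2 (Fin n) × Fin lam | ¬ p.1.IsDiag ∧ ∃ v, ce p.1 p.2 = cv v}.toFinset
    (fun _ => Set.mem_toFinset.1) hinc hharm
  rw [Fintype.card_fin, Nat.choose_two_right] at h
  rw [Set.ncard_eq_toFinset_card']
  omega

/-- In any harmonious total colouring of `λK_n` (`λ ≥ 1`, `n ≥ 2`), the number of edges
whose colour is also the colour of some vertex is at most `⌊n(n-1)/4⌋`. -/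
theorem multigraph_vertex_coloured_edges (n lam k : ℕ) (hlam : 1 ≤ lam) (hn : 2 ≤ n)
    (cv : Fin n → Fin k) (ce : Sym2 (Fin n) → Fin lam → Fin k)
    (hc : IsHarmoniousTotalColoringM n lam k cv ce) :
    {p : Sym2 (Fin n) × Fin lam | ¬ p.1.IsDiag ∧ ∃ v, ce p.1 p.2 = cv v}.ncard ≤
      n * (n - 1) / 4 :=
  multigraph_vertex_coloured_edges_general n lam k cv ce hc
end

section
/- For every even integer n ≥ 2 and every integer λ ≥ 1, the harmonious total chromatic number of the complete multigraph λK_n satisfies h_t(λK_n) ≥ (λ−1)(n−1) + 3n/2. -/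
open Finset

def incidences (n lam : ℕ) : Finset (Fin n × Sym2 (Fin n) × Fin lam) :=
  univ.filter fun p => ¬ p.2.1.IsDiag ∧ p.1 ∈ p.2.1

def incidencesOfColour {n lam k : ℕ} (ce : Sym2 (Fin n) → Fin lam → Fin k) (c : Fin k) :
    Finset (Fin n × Sym2 (Fin n) × Fin lam) :=
  (incidences n lam).filter fun p => ce p.2.1 p.2.2 = c

lemma mem_incidences {n lam : ℕ} {p : Fin n × Sym2 (Fin n) × Fin lam} :
    p ∈ incidences n lam ↔ ¬ p.2.1.IsDiag ∧ p.1 ∈ p.2.1 := by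
  simp [incidences]

lemma card_filter_fst_incidences (n lam : ℕ) (v : Fin n) :
    #((incidences n lam).filter (·.1 = v)) = lam * (n - 1) := by
  have hfiber : (incidences n lam).filter (·.1 = v) =
      ((univ.erase v) ×ˢ (univ : Finset (Fin lam))).image fun q => (v, s(v, q.1), q.2) := by
    ext ⟨w, e, i⟩
    simp only [mem_filter, mem_incidences, mem_image, mem_product, mem_erase, mem_univ,
      and_true, Prod.mk.injEq, Prod.exists]
    constructor
    · rintro ⟨⟨hdiag, hw⟩, rfl⟩
      obtain ⟨u, rfl⟩ := Sym2.mem_iff_exists.mp hw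
      exact ⟨u, i, fun hu => hdiag (by simp [hu]), rfl, rfl, rfl⟩
    · rintro ⟨u, i, hu, rfl, rfl, rfl⟩
      exact ⟨⟨by simpa using Ne.symm hu, Sym2.mem_mk_left v u⟩, rfl⟩
  rw [hfiber, card_image_of_injective, card_product, card_erase_of_mem (mem_univ v)]
  · simp [Nat.mul_comm]
  · rintro ⟨u, i⟩ ⟨u', i'⟩ h
    simp only [Prod.mk.injEq, Sym2.congr_right, true_and] at h
    rw [h.1, h.2]

lemma card_incidences (n lam : ℕ) : #(incidences n lam) = n * (lam * (n - 1)) := by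
  rw [card_eq_sum_card_fiberwise (f := Prod.fst) (t := univ) fun _ _ => mem_univ _]
  simp [card_filter_fst_incidences]

namespace IsHarmoniousTotalColoringM

variable {n lam k : ℕ} {cv : Fin n → Fin k} {ce : Sym2 (Fin n) → Fin lam → Fin k}

lemma card_incidencesOfColour_le (hc : IsHarmoniousTotalColoringM n lam k cv ce) (c : Fin k) :
    #(incidencesOfColour ce c) ≤ n := by
  obtain ⟨-, hedge, -, -⟩ := hc
  refine (card_le_card_of_injOn Prod.fst (fun _ _ => mem_univ _) ?_).trans_eq (card_fin n)
  rintro ⟨w, e, i⟩ hp ⟨w', f, j⟩ hq (rfl : w = w')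
  simp only [coe_filter, incidencesOfColour, mem_incidences, Set.mem_ofPred_eq] at hp hq
  by_contra hne
  exact hedge e f i j hp.1.1 hq.1.1 (by simpa using hne) ⟨w, hp.1.2, hq.1.2⟩
    (hp.2.trans hq.2.symm)

lemma degree_add_card_incidencesOfColour_lt (hc : IsHarmoniousTotalColoringM n lam k cv ce)
    (v : Fin n) : lam * (n - 1) + #(incidencesOfColour ce (cv v)) < k := by
  obtain ⟨-, -, hinc, hpair⟩ := hc
  set A := (incidences n lam).filter (·.1 = v)
  set B := incidencesOfColour ce (cv v)
  have hAB : A ∪ B ⊆ incidences n lam := union_subset (filter_subset _ _) (filter_subset _ _)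
  have hdisj : Disjoint A B := by
    refine disjoint_left.mpr fun p hpA hpB => ?_
    obtain ⟨hdiag, hmem⟩ := mem_incidences.mp (mem_filter.mp hpA).1
    exact hinc _ _ _ hdiag hmem (by rw [(mem_filter.mp hpA).2, (mem_filter.mp hpB).2])
  have hmaps : ∀ p ∈ A ∪ B,
      s(cv p.1, ce p.2.1 p.2.2) ∈ (univ.erase (cv v)).image (s(cv v, ·)) := by
    intro p hp
    obtain ⟨hdiag, hmem⟩ := mem_incidences.mp (hAB hp)
    simp only [mem_image, mem_erase, mem_univ, and_true]
    rcases mem_union.mp hp with hp | hp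
    · have hv : p.1 = v := (mem_filter.mp hp).2
      refine ⟨ce p.2.1 p.2.2, fun h => hinc p.1 p.2.1 p.2.2 hdiag hmem ?_, by rw [hv]⟩
      rw [hv, h]
    · have hcol : ce p.2.1 p.2.2 = cv v := (mem_filter.mp hp).2
      refine ⟨cv p.1, fun h => hinc p.1 p.2.1 p.2.2 hdiag hmem (h.trans hcol.symm), ?_⟩
      rw [hcol, Sym2.eq_swap]
  have hinj : Set.InjOn (fun p : Fin n × Sym2 (Fin n) × Fin lam => s(cv p.1, ce p.2.1 p.2.2))
      ↑(A ∪ B) := by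
    rintro ⟨w, e, i⟩ hp ⟨w', f, j⟩ hq h
    obtain ⟨hde, hw⟩ := mem_incidences.mp (hAB hp)
    obtain ⟨hdf, hw'⟩ := mem_incidences.mp (hAB hq)
    obtain ⟨rfl, rfl, rfl⟩ := hpair w e i w' f j hde hdf hw hw' h
    rfl
  have hcard : #A + #B ≤ k - 1 := calc
    #A + #B = #(A ∪ B) := (card_union_of_disjoint hdisj).symm
    _ ≤ #((univ.erase (cv v)).image (s(cv v, ·))) := card_le_card_of_injOn _ hmaps hinj
    _ ≤ #(univ.erase (cv v)) := card_image_le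
    _ = k - 1 := by simp
  rw [card_filter_fst_incidences] at hcard
  have : 0 < k := Fin.pos (cv v)
  omega

lemma two_mul_degree_add_lt (hc : IsHarmoniousTotalColoringM n lam k cv ce) (hn : 0 < n) :
    2 * (lam * (n - 1)) + n < 2 * k := by
  set V := univ.image cv
  have hcv : Function.Injective cv := fun u v h => by_contra fun huv => hc.1 u v huv h
  have hV : #V = n := by simp [V, card_image_of_injective _ hcv]
  have hsum : ∑ c ∈ V, #(incidencesOfColour ce c) +
      ∑ c ∈ univ \ V, #(incidencesOfColour ce c) = n * (lam * (n - 1)) := by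
    rw [add_comm, sum_sdiff (subset_univ V), ← card_incidences n lam,
      card_eq_sum_card_fiberwise (f := fun p => ce p.2.1 p.2.2) fun _ _ => mem_univ _]
    rfl
  have hsumV : ∑ c ∈ V, (lam * (n - 1) + #(incidencesOfColour ce c) + 1) ≤ n * k := by
    rw [sum_image fun u _ v _ h => hcv h]
    simpa using sum_le_sum fun v (_ : v ∈ univ) =>
      Nat.succ_le_of_lt (hc.degree_add_card_incidencesOfColour_lt v)
  have hsumW : ∑ c ∈ univ \ V, #(incidencesOfColour ce c) + n * n ≤ k * n := by
    have hW : #(univ \ V) + n = k := by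
      rw [← hV, card_sdiff_add_card_eq_card (subset_univ V), card_univ, Fintype.card_fin]
    calc ∑ c ∈ univ \ V, #(incidencesOfColour ce c) + n * n
        ≤ ∑ _c ∈ univ \ V, n + n * n := by gcongr; exact hc.card_incidencesOfColour_le _
      _ = k * n := by rw [sum_const, smul_eq_mul, ← add_mul, hW]
  rw [sum_add_distrib, sum_add_distrib, sum_const, sum_const, hV, smul_eq_mul,
    smul_eq_mul] at hsumV
  have : n * (2 * (lam * (n - 1)) + n + 1) ≤ n * (2 * k) := by linarith
  exact Nat.le_of_mul_le_mul_left this hn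

end IsHarmoniousTotalColoringM

/-- Giving every vertex and every edge its own colour is harmonious. -/
lemma exists_isHarmoniousTotalColoringM (n lam : ℕ) :
    ∃ k cv ce, IsHarmoniousTotalColoringM n lam k cv ce := by
  let φ := Fintype.equivFin (Fin n ⊕ Sym2 (Fin n) × Fin lam)
  refine ⟨_, fun v => φ (.inl v), fun e i => φ (.inr (e, i)), ?_, ?_, ?_, ?_⟩
  · exact fun u v huv h => huv (by simpa using h)
  · exact fun e f i j _ _ hne _ h => hne (by simpa using h)
  · exact fun v e i _ _ h => by simp at h
  · intro v e i w f j _ _ _ _ h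
    simpa [φ.injective.eq_iff] using h

/-- For every even `n ≥ 2` and every `λ ≥ 1`,
`h_t(λK_n) ≥ (λ - 1)(n - 1) + 3n/2`. -/
theorem ht_multigraph_lower_even (n lam : ℕ) (hlam : 1 ≤ lam) (hn : 2 ≤ n) (hne : Even n) :
    (lam - 1) * (n - 1) + 3 * n / 2 ≤ harmoniousTotalChromaticNumberM n lam := by
  refine le_csInf (exists_isHarmoniousTotalColoringM n lam) ?_
  rintro k ⟨cv, ce, hc⟩
  have hbound := hc.two_mul_degree_add_lt (by omega)
  obtain ⟨m, rfl⟩ := hne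
  obtain ⟨l, rfl⟩ : ∃ l, lam = l + 1 := ⟨lam - 1, by omega⟩
  rw [add_mul, one_mul] at hbound
  rw [Nat.add_sub_cancel]
  omega
end
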